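/- arXiv:1509.07346 — 6 statements merged into one kernel-verified Lean document; each statement's English description precedes it below -/
import Mathlib

section
/- If G = (A, B, E) is a bipartite graph such that there exist positive reals a, b and a weight function w: E → ℝ⁺ with the sum of weights of edges at each vertex of A equal to a and at each vertex of B equal to b, then G is a normalized matching graph: for every subset X ⊆ A, |X|/|A| ≤ |Γ(X)|/|B|, where Γ(X) is the set of neighbors of X in B. -/
/-- If a bipartite graph `E` between finite nonempty parts `α` and `β`
admits a positive edge-weight function whose sum at every vertex of `α` is `a > 0`
and at every vertex of `β` is `b > 0`, then it is a normalized matching graph. -/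
theorem stmt_0 {α β : Type*} [Fintype α] [Fintype β] [Nonempty α] [Nonempty β]
    (E : α → β → Prop) [∀ i j, Decidable (E i j)]
    (w : α → β → ℝ) (a b : ℝ) (ha : 0 < a) (hb : 0 < b)
    (hw : ∀ i j, E i j → 0 < w i j)
    (hA : ∀ i : α, ∑ j ∈ Finset.univ.filter (fun j => E i j), w i j = a)
    (hB : ∀ j : β, ∑ i ∈ Finset.univ.filter (fun i => E i j), w i j = b) :
    ∀ X : Finset α,
      (X.card : ℝ) / (Fintype.card α : ℝ) ≤
      ((Finset.univ.filter (fun j => ∃ i ∈ X, E i j)).card : ℝ) / (Fintype.card β : ℝ) := by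
  intro X
  classical
  set Γ := Finset.univ.filter (fun j => ∃ i ∈ X, E i j) with hΓ
  -- general double-count lemma over any Y ⊆ α
  have key : ∀ Y : Finset α,
      (∑ i ∈ Y, ∑ j ∈ Finset.univ.filter (fun j => E i j), w i j)
      = ∑ j : β, ∑ i ∈ Y.filter (fun i => E i j), w i j := by
    intro Y
    rw [Finset.sum_comm']
    simp [Finset.mem_filter, and_comm]
  -- total: a * |α| = b * |β|
  have total : a * (Fintype.card α : ℝ) = b * (Fintype.card β : ℝ) := by
    have h1 : (∑ i : α, ∑ j ∈ Finset.univ.filter (fun j => E i j), w i j)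
        = a * (Fintype.card α : ℝ) := by
      rw [Finset.sum_congr rfl (fun i _ => hA i), Finset.sum_const, Finset.card_univ,
        nsmul_eq_mul, mul_comm]
    have h2 : (∑ j : β, ∑ i ∈ (Finset.univ : Finset α).filter (fun i => E i j), w i j)
        = b * (Fintype.card β : ℝ) := by
      rw [Finset.sum_congr rfl (fun j _ => hB j), Finset.sum_const, Finset.card_univ,
        nsmul_eq_mul, mul_comm]
    rw [← h1, key Finset.univ, h2]
  -- partial: a * |X| ≤ b * |Γ|
  have partial_le : a * (X.card : ℝ) ≤ b * (Γ.card : ℝ) := by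
    have h1 : (∑ i ∈ X, ∑ j ∈ Finset.univ.filter (fun j => E i j), w i j)
        = a * (X.card : ℝ) := by
      rw [Finset.sum_congr rfl (fun i _ => hA i), Finset.sum_const, nsmul_eq_mul, mul_comm]
    rw [← h1, key X]
    have hzero : ∀ j ∈ (Finset.univ : Finset β), j ∉ Γ →
        (∑ i ∈ X.filter (fun i => E i j), w i j) = 0 := by
      intro j _ hj
      have : X.filter (fun i => E i j) = ∅ := by
        rw [Finset.filter_eq_empty_iff]
        intro i hi hij
        exact hj (by simp [hΓ]; exact ⟨i, hi, hij⟩)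
      simp [this]
    rw [← Finset.sum_subset (Finset.subset_univ Γ) hzero]
    have hbd : ∀ j ∈ Γ, (∑ i ∈ X.filter (fun i => E i j), w i j) ≤ b := by
      intro j _
      rw [← hB j]
      apply Finset.sum_le_sum_of_subset_of_nonneg
      · intro i hi
        simp only [Finset.mem_filter] at hi ⊢
        exact ⟨Finset.mem_univ i, hi.2⟩
      · intro i hi _
        exact le_of_lt (hw i j (Finset.mem_filter.mp hi).2)
    calc (∑ j ∈ Γ, ∑ i ∈ X.filter (fun i => E i j), w i j)
        ≤ ∑ _j ∈ Γ, b := Finset.sum_le_sum hbd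
      _ = b * (Γ.card : ℝ) := by rw [Finset.sum_const, nsmul_eq_mul, mul_comm]
  -- conclude
  have hαpos : (0 : ℝ) < Fintype.card α := by positivity
  have hβpos : (0 : ℝ) < Fintype.card β := by positivity
  rw [div_le_div_iff₀ hαpos hβpos]
  have h := mul_le_mul_of_nonneg_right partial_le (le_of_lt hβpos)
  -- a * X * |β| ≤ b * Γ * |β| = (b * |β|) * Γ = (a * |α|) * Γ
  nlinarith [mul_le_mul_of_nonneg_right partial_le (le_of_lt hβpos), total, ha.le]
end

section
/- If G and G' are two bipartite graphs on the same vertex parts A and B (with |A| ≤ |B|), both having the normalized matching property, then there exists a subset V ⊆ B with |V| = |A| such that G has a complete matching from A onto V and G' also has a complete matching from A onto V. -/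
/-- Arithmetic core of the Hall condition check. -/
lemma stmt2_arith (n m x y g w u v : ℕ) (hnm : n ≤ m) (hxn : x ≤ n)
    (h1 : x * m ≤ g * n) (h2 : y * n ≤ w * m)
    (hug : g ≤ u) (huy : y ≤ u) (hv : w ≤ v) : x + y ≤ u + v := by
  rcases Nat.eq_zero_or_pos m with hm | hm
  · omega
  rcases le_or_gt (x * m) (y * n) with hc | hc
  · -- then x ≤ w
    have : x * m ≤ w * m := le_trans hc h2
    have hxw : x ≤ w := Nat.le_of_mul_le_mul_right this hm
    omega
  · -- x > 0, hence n > 0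
    have hx0 : 0 < x := by
      by_contra h
      push_neg at h
      interval_cases x
      omega
    have hn0 : 0 < n := lt_of_lt_of_le hx0 hxn
    have key : (x + y) * (m * n) ≤ (g + w) * (m * n) := by
      nlinarith [Nat.mul_le_mul_left m h1, Nat.mul_le_mul_left n h2]
    have := Nat.le_of_mul_le_mul_right key (Nat.mul_pos hm hn0)
    omega

/-- If two bipartite graphs on the same parts `α`, `β` (with `|α| ≤ |β|`)
both have the normalized matching property, then some common `|α|`-element subset `V`
of `β` is the image of a complete matching in each of them. -/
theorem stmt_2 {α β : Type*} [Fintype α] [Fintype β] [DecidableEq β]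
    (E E' : α → β → Prop) [∀ i j, Decidable (E i j)] [∀ i j, Decidable (E' i j)]
    (hcard : Fintype.card α ≤ Fintype.card β)
    (hnm : ∀ X : Finset α,
      X.card * Fintype.card β ≤
        (Finset.univ.filter (fun j => ∃ i ∈ X, E i j)).card * Fintype.card α)
    (hnm' : ∀ X : Finset α,
      X.card * Fintype.card β ≤
        (Finset.univ.filter (fun j => ∃ i ∈ X, E' i j)).card * Fintype.card α) :
    ∃ V : Finset β, V.card = Fintype.card α ∧
      (∃ f : α → β, Function.Injective f ∧ (∀ i, E i (f i)) ∧ Finset.univ.image f = V) ∧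
      (∃ f : α → β, Function.Injective f ∧ (∀ i, E' i (f i)) ∧ Finset.univ.image f = V) := by
  classical
  set n := Fintype.card α with hn
  set m := Fintype.card β with hm
  -- dual normalized matching for E'
  have hdual : ∀ Y : Finset β,
      Y.card * n ≤ (Finset.univ.filter (fun a => ∃ b ∈ Y, E' a b)).card * m := by
    intro Y
    set N := Finset.univ.filter (fun a => ∃ b ∈ Y, E' a b) with hN
    set X := Nᶜ with hX
    have h1 := hnm' X
    have hsub : (Finset.univ.filter (fun j => ∃ i ∈ X, E' i j)) ⊆ Yᶜ := by
      intro b hb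
      simp only [Finset.mem_filter] at hb
      obtain ⟨-, a, ha, hab⟩ := hb
      rw [hX, Finset.mem_compl, hN, Finset.mem_filter] at ha
      rw [Finset.mem_compl]
      intro hbY
      exact ha ⟨Finset.mem_univ a, b, hbY, hab⟩
    have h2 : (Finset.univ.filter (fun j => ∃ i ∈ X, E' i j)).card ≤ m - Y.card := by
      have := Finset.card_le_card hsub
      rwa [Finset.card_compl] at this
    have hXc : X.card = n - N.card := by rw [hX, Finset.card_compl]
    have hNn : N.card ≤ n := by simpa using Finset.card_le_card (Finset.subset_univ N)
    have hYm : Y.card ≤ m := by simpa using Finset.card_le_card (Finset.subset_univ Y)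
    have h3 : (n - N.card) * m ≤ (m - Y.card) * n := by
      calc (n - N.card) * m = X.card * m := by rw [hXc]
        _ ≤ _ := h1
        _ ≤ (m - Y.card) * n := Nat.mul_le_mul_right n h2
    rw [Nat.sub_mul, Nat.sub_mul] at h3
    have e1 : N.card * m ≤ n * m := Nat.mul_le_mul_right m hNn
    have e2 : Y.card * n ≤ m * n := Nat.mul_le_mul_right n hYm
    have e3 : m * n = n * m := Nat.mul_comm m n
    omega
  -- the auxiliary bipartite graph
  let t : (α ⊕ β) → Finset (β ⊕ α) := fun x =>
    match x with
    | Sum.inl a => (Finset.univ.filter (fun b => E a b)).image Sum.inl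
    | Sum.inr b => insert (Sum.inl b) ((Finset.univ.filter (fun a => E' a b)).image Sum.inr)
  -- Hall condition
  have hall : ∀ s : Finset (α ⊕ β), s.card ≤ (s.biUnion t).card := by
    intro s
    set X := s.toLeft with hXdef
    set Y := s.toRight with hYdef
    set G := Finset.univ.filter (fun b => ∃ a ∈ X, E a b) with hG
    set N := Finset.univ.filter (fun a => ∃ b ∈ Y, E' a b) with hNd
    have hsub1 : (G ∪ Y).image Sum.inl ⊆ s.biUnion t := by
      intro z hz
      simp only [Finset.mem_image] at hz
      obtain ⟨b, hb, rfl⟩ := hz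
      rw [Finset.mem_union] at hb
      rcases hb with hb | hb
      · rw [hG, Finset.mem_filter] at hb
        obtain ⟨-, a, ha, hab⟩ := hb
        refine Finset.mem_biUnion.2 ⟨Sum.inl a, ?_, ?_⟩
        · rwa [← Finset.mem_toLeft]
        · simp [t, hab]
      · refine Finset.mem_biUnion.2 ⟨Sum.inr b, ?_, ?_⟩
        · rwa [← Finset.mem_toRight]
        · simp [t]
    have hsub2 : N.image Sum.inr ⊆ s.biUnion t := by
      intro z hz
      simp only [Finset.mem_image] at hz
      obtain ⟨a, ha, rfl⟩ := hz
      rw [hNd, Finset.mem_filter] at ha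
      obtain ⟨-, b, hb, hab⟩ := ha
      refine Finset.mem_biUnion.2 ⟨Sum.inr b, ?_, ?_⟩
      · rwa [← Finset.mem_toRight]
      · simp [t, hab]
    have hdisj : Disjoint ((G ∪ Y).image Sum.inl) (N.image Sum.inr) := by
      rw [Finset.disjoint_left]
      rintro z hz1 hz2
      simp only [Finset.mem_image] at hz1 hz2
      obtain ⟨b, -, rfl⟩ := hz1
      obtain ⟨a, -, h⟩ := hz2
      exact absurd h (by simp)
    have hcardbi : (G ∪ Y).card + N.card ≤ (s.biUnion t).card := by
      have := Finset.card_le_card (Finset.union_subset hsub1 hsub2)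
      rwa [Finset.card_union_of_disjoint hdisj, Finset.card_image_of_injective _ Sum.inl_injective,
        Finset.card_image_of_injective _ Sum.inr_injective] at this
    have hsX : X.card + Y.card = s.card := Finset.card_toLeft_add_card_toRight
    have h1 : X.card * m ≤ G.card * n := hnm X
    have h2 : Y.card * n ≤ N.card * m := hdual Y
    have key : X.card + Y.card ≤ (G ∪ Y).card + N.card :=
      stmt2_arith n m X.card Y.card G.card N.card (G ∪ Y).card N.card hcard
        (by simpa using Finset.card_le_card (Finset.subset_univ X)) h1 h2
        (Finset.card_le_card Finset.subset_union_left)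
        (Finset.card_le_card Finset.subset_union_right) le_rfl
    omega
  obtain ⟨F, hFinj, hFmem⟩ := (Finset.all_card_le_biUnion_card_iff_exists_injective t).mp hall
  have hFbij : Function.Bijective F := by
    rw [Fintype.bijective_iff_injective_and_card]
    exact ⟨hFinj, by simp [Fintype.card_sum, Nat.add_comm]⟩
  -- F on inl lands in inl
  have hFl : ∀ a : α, ∃ b : β, F (Sum.inl a) = Sum.inl b ∧ E a b := by
    intro a
    have := hFmem (Sum.inl a)
    simp only [t, Finset.mem_image, Finset.mem_filter] at this
    obtain ⟨b, ⟨-, hb⟩, hb2⟩ := this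
    exact ⟨b, hb2.symm, hb⟩
  choose f hf hfE using hFl
  have hfinj : Function.Injective f := by
    intro a a' h
    have : F (Sum.inl a) = F (Sum.inl a') := by rw [hf, hf, h]
    exact Sum.inl_injective (hFinj this)
  set V := Finset.univ.image f with hV
  -- second matching
  have hFg : ∀ a : α, ∃ b : β, F (Sum.inr b) = Sum.inr a ∧ E' a b := by
    intro a
    obtain ⟨x, hx⟩ := hFbij.2 (Sum.inr a)
    rcases x with a' | b
    · exfalso
      have hb := hf a'
      rw [hx] at hb
      exact absurd hb (by simp)
    · refine ⟨b, hx, ?_⟩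
      have := hFmem (Sum.inr b)
      rw [hx] at this
      simp only [t, Finset.mem_insert, Finset.mem_image, Finset.mem_filter] at this
      rcases this with h | ⟨a'', ⟨-, h⟩, h2⟩
      · exact absurd h (by simp)
      · rwa [← Sum.inr_injective h2]
  choose g hg hgE using hFg
  have hginj : Function.Injective g := by
    intro a a' h
    have : F (Sum.inr (g a)) = F (Sum.inr (g a')) := by rw [h]
    rw [hg, hg] at this
    exact Sum.inr_injective this
  have himg : Finset.univ.image g = V := by
    apply Finset.Subset.antisymm
    · -- g a ∈ V
      intro b hb
      simp only [Finset.mem_image] at hb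
      obtain ⟨a, -, rfl⟩ := hb
      by_contra hbV
      -- then F (inr (g a)) = inl (g a)
      obtain ⟨x, hx⟩ := hFbij.2 (Sum.inl (g a))
      rcases x with a' | b'
      · exact hbV (by rw [hV]; exact Finset.mem_image.2 ⟨a', Finset.mem_univ a',
          Sum.inl_injective (by rw [← hf a', hx])⟩)
      · have hmem := hFmem (Sum.inr b')
        rw [hx] at hmem
        simp only [t, Finset.mem_insert, Finset.mem_image, Finset.mem_filter] at hmem
        rcases hmem with h | ⟨a'', -, h2⟩
        · have : b' = g a := Sum.inl_injective h.symm
          subst this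
          rw [hg] at hx
          exact absurd hx (by simp)
        · exact absurd h2 (by simp)
    · intro b hbV
      rw [hV] at hbV
      simp only [Finset.mem_image] at hbV
      obtain ⟨a, -, rfl⟩ := hbV
      -- F (inr (f a)) must be inr a'' for some a''
      have hmem := hFmem (Sum.inr (f a))
      rcases h : F (Sum.inr (f a)) with b'' | a''
      · -- F (inr (f a)) = inl b'' with b'' = f a, contradicting injectivity
        rw [h] at hmem
        simp only [t, Finset.mem_insert, Finset.mem_image, Finset.mem_filter] at hmem
        rcases hmem with h2 | ⟨a'', -, h2⟩
        · have hb : b'' = f a := Sum.inl_injective h2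
          subst hb
          have : F (Sum.inr (f a)) = F (Sum.inl a) := by rw [h, hf]
          exact absurd (hFinj this) (by simp)
        · exact absurd h2 (by simp)
      · have : g a'' = f a := by
          have : F (Sum.inr (g a'')) = F (Sum.inr (f a)) := by rw [hg, h]
          exact Sum.inr_injective (hFinj this)
        exact Finset.mem_image.2 ⟨a'', Finset.mem_univ a'', this⟩
  refine ⟨V, ?_, ⟨f, hfinj, hfE, rfl⟩, ⟨g, hginj, hgE, himg⟩⟩
  rw [hV, Finset.card_image_of_injective _ hfinj, Finset.card_univ]
end

section
/- The Boolean lattice 2^[n] has at least 2^(C(n-1, ⌊(n-2)/2⌋)) symmetric chain decompositions. In particular, 2^[n] has at least 2^(Ω(2^n/√n)) symmetric chain decompositions. -/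
open Finset

/-- A symmetric chain in `2^[n]`: a chain `c₀ ⊂ ... ⊂ c_k` with `|c_i| = (n-k)/2 + i`,
i.e. a chain whose set of cardinalities is an interval `[m, n-m]`. -/
def IsSymmetricChain (n : ℕ) (C : Finset (Finset (Fin n))) : Prop :=
  (∀ x ∈ C, ∀ y ∈ C, x ⊆ y ∨ y ⊆ x) ∧
  ∃ m : ℕ, 2 * m ≤ n ∧ C.image Finset.card = Finset.Icc m (n - m)

/-- A symmetric chain decomposition of `2^[n]`. -/
def IsSymmetricChainDecomposition (n : ℕ) (P : Finset (Finset (Finset (Fin n)))) : Prop :=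
  (∀ C ∈ P, IsSymmetricChain n C) ∧ ∀ x : Finset (Fin n), ∃! C, C ∈ P ∧ x ∈ C

namespace SCD

variable {n : ℕ}

def up (c : Finset (Fin n)) : Finset (Fin (n+1)) := c.image Fin.castSucc

def upl (c : Finset (Fin n)) : Finset (Fin (n+1)) := insert (Fin.last n) (up c)

def down (x : Finset (Fin (n+1))) : Finset (Fin n) :=
  Finset.univ.filter (fun i => Fin.castSucc i ∈ x)

lemma last_not_mem_up (c : Finset (Fin n)) : Fin.last n ∉ up c := by
  simp [up, Fin.castSucc_lt_last, fun i => (Fin.castSucc_lt_last i).ne]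

lemma up_injective : Function.Injective (up (n := n)) :=
  fun a b h => Finset.image_injective (Fin.castSucc_injective n) h

lemma upl_injective : Function.Injective (upl (n := n)) := by
  intro a b h
  apply up_injective
  have := congrArg (fun s => Finset.erase s (Fin.last n)) h
  simpa [upl, Finset.erase_insert, last_not_mem_up] using this

lemma card_up (c : Finset (Fin n)) : (up c).card = c.card :=
  Finset.card_image_of_injective _ (Fin.castSucc_injective n)

lemma card_upl (c : Finset (Fin n)) : (upl c).card = c.card + 1 := by
  rw [upl, Finset.card_insert_of_notMem (last_not_mem_up c), card_up]

lemma up_subset_up {a b : Finset (Fin n)} (h : a ⊆ b) : up a ⊆ up b :=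
  Finset.image_subset_image h

lemma up_subset_upl {a b : Finset (Fin n)} (h : a ⊆ b) : up a ⊆ upl b :=
  (up_subset_up h).trans (Finset.subset_insert _ _)

lemma upl_subset_upl {a b : Finset (Fin n)} (h : a ⊆ b) : upl a ⊆ upl b :=
  Finset.insert_subset_insert _ (up_subset_up h)

lemma last_mem_upl (c : Finset (Fin n)) : Fin.last n ∈ upl c := Finset.mem_insert_self _ _

lemma up_ne_upl (a b : Finset (Fin n)) : up a ≠ upl b := by
  intro h
  exact last_not_mem_up a (h ▸ last_mem_upl b)

lemma upl_ne_up (a b : Finset (Fin n)) : upl a ≠ up b := (up_ne_upl b a).symm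

lemma down_up (c : Finset (Fin n)) : down (up c) = c := by
  ext i; simp [down, up, Fin.castSucc_injective n |>.eq_iff]

lemma down_upl (c : Finset (Fin n)) : down (upl c) = c := by
  ext i
  simp [down, upl, up, Fin.castSucc_injective n |>.eq_iff,
    (Fin.castSucc_lt_last i).ne]

lemma eq_up_down {x : Finset (Fin (n+1))} (h : Fin.last n ∉ x) : x = up (down x) := by
  ext j
  rcases Fin.eq_castSucc_or_eq_last j with ⟨i, rfl⟩ | rfl
  · simp [up, down, Fin.castSucc_injective n |>.eq_iff]
  · simp [h, last_not_mem_up]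

lemma eq_upl_down {x : Finset (Fin (n+1))} (h : Fin.last n ∈ x) : x = upl (down x) := by
  ext j
  rcases Fin.eq_castSucc_or_eq_last j with ⟨i, rfl⟩ | rfl
  · simp [upl, up, down, Fin.castSucc_injective n |>.eq_iff, (Fin.castSucc_lt_last i).ne]
  · simp [h, last_mem_upl]



variable {n : ℕ}

/-- structure of a symmetric chain with minimum level `m` -/
structure ChainData (n : ℕ) (C : Finset (Finset (Fin n))) (m : ℕ) : Prop where
  chain : ∀ x ∈ C, ∀ y ∈ C, x ⊆ y ∨ y ⊆ x
  hm : 2 * m ≤ n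
  himg : C.image Finset.card = Finset.Icc m (n - m)

lemma card_injOn {C : Finset (Finset (Fin n))}
    (hc : ∀ x ∈ C, ∀ y ∈ C, x ⊆ y ∨ y ⊆ x) :
    ∀ x ∈ C, ∀ y ∈ C, x.card = y.card → x = y := by
  intro x hx y hy hxy
  rcases hc x hx y hy with h | h
  · exact Finset.eq_of_subset_of_card_le h hxy.ge
  · exact (Finset.eq_of_subset_of_card_le h hxy.le).symm

namespace ChainData

variable {C : Finset (Finset (Fin n))} {m : ℕ} (h : ChainData n C m)

include h

lemma nonempty : C.Nonempty := by
  have : (C.image Finset.card).Nonempty := by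
    rw [h.himg]
    have := h.hm
    exact Finset.nonempty_Icc.2 (by omega)
  exact Finset.Nonempty.of_image this

lemma card_mem {c : Finset (Fin n)} (hc : c ∈ C) : c.card ∈ Finset.Icc m (n - m) := by
  rw [← h.himg]; exact Finset.mem_image_of_mem _ hc

lemma exists_card {j : ℕ} (hj : j ∈ Finset.Icc m (n - m)) : ∃ c ∈ C, c.card = j := by
  rw [← h.himg] at hj
  simpa using hj

lemma sup_mem : C.sup id ∈ C := by
  obtain ⟨t, ht, htmax⟩ := C.exists_max_image Finset.card h.nonempty
  have : C.sup id = t := by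
    apply le_antisymm
    · apply Finset.sup_le
      intro c hc
      rcases h.chain c hc t ht with hh | hh
      · exact hh
      · exact (Finset.eq_of_subset_of_card_le hh (htmax c hc)).symm.le
    · exact Finset.le_sup (f := id) ht
  rw [this]; exact ht

lemma subset_sup {c : Finset (Fin n)} (hc : c ∈ C) : c ⊆ C.sup id :=
  Finset.le_sup (f := id) hc

lemma card_sup : (C.sup id).card = n - m := by
  have hm := h.hm
  obtain ⟨c, hc, hcard⟩ := h.exists_card (Finset.mem_Icc.2 ⟨Nat.le_sub_of_add_le (by omega), le_rfl⟩)
  have h1 : c.card ≤ (C.sup id).card := Finset.card_le_card (h.subset_sup hc)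
  have h2 := Finset.mem_Icc.1 (h.card_mem h.sup_mem)
  omega

lemma inf_mem : C.inf id ∈ C := by
  obtain ⟨t, ht, htmin⟩ := C.exists_min_image Finset.card h.nonempty
  have : C.inf id = t := by
    apply le_antisymm
    · exact Finset.inf_le (f := id) ht
    · apply Finset.le_inf
      intro c hc
      rcases h.chain t ht c hc with hh | hh
      · exact hh
      · exact (Finset.eq_of_subset_of_card_le hh (htmin c hc)) ▸ le_rfl
  rw [this]; exact ht

lemma inf_subset {c : Finset (Fin n)} (hc : c ∈ C) : C.inf id ⊆ c :=
  Finset.inf_le (f := id) hc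

lemma card_inf : (C.inf id).card = m := by
  have hm := h.hm
  obtain ⟨c, hc, hcard⟩ := h.exists_card (Finset.mem_Icc.2 ⟨le_rfl, Nat.le_sub_of_add_le (by omega)⟩)
  have h1 : (C.inf id).card ≤ c.card := Finset.card_le_card (h.inf_subset hc)
  have h2 := Finset.mem_Icc.1 (h.card_mem h.inf_mem)
  omega

lemma card_eq : C.card = n - m - m + 1 := by
  rw [← Finset.card_image_of_injOn (fun x hx y hy => card_injOn h.chain x hx y hy), h.himg,
    Nat.card_Icc]
  have := h.hm
  omega

lemma inf_ne_sup_of_long (hlong : 2 ≤ C.card) : C.inf id ≠ C.sup id := by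
  intro he
  have := h.card_inf
  have := h.card_sup
  have := h.card_eq
  rw [he] at *
  omega

end ChainData

lemma isSymmetricChain_iff {C : Finset (Finset (Fin n))} :
    IsSymmetricChain n C ↔ ∃ m, ChainData n C m := by
  constructor
  · rintro ⟨h1, m, h2, h3⟩; exact ⟨m, h1, h2, h3⟩
  · rintro ⟨m, h⟩; exact ⟨h.chain, m, h.hm, h.himg⟩



/-! ### The splitting construction -/

def chainA (C : Finset (Finset (Fin n))) (b : Bool) : Finset (Finset (Fin (n+1))) :=
  if b then C.image up ∪ {upl (C.sup id)}
  else insert (up (C.inf id)) (C.image upl)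

def chainB (C : Finset (Finset (Fin n))) (b : Bool) : Finset (Finset (Fin (n+1))) :=
  if b then (C.erase (C.sup id)).image upl
  else (C.erase (C.inf id)).image up

def contrib (C : Finset (Finset (Fin n))) (b : Bool) : Finset (Finset (Finset (Fin (n+1)))) :=
  ({chainA C b, chainB C b} : Finset _).erase ∅

def extend (P : Finset (Finset (Finset (Fin n)))) (f : Finset (Finset (Fin n)) → Bool) :
    Finset (Finset (Finset (Fin (n+1)))) :=
  P.biUnion fun C => contrib C (f C)

lemma mem_contrib {C : Finset (Finset (Fin n))} {b : Bool} {D : Finset (Finset (Fin (n+1)))} :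
    D ∈ contrib C b ↔ (D = chainA C b ∨ D = chainB C b) ∧ D ≠ ∅ := by
  simp [contrib, Finset.mem_erase, and_comm]

lemma mem_chainA_up {C : Finset (Finset (Fin n))} {b : Bool} {y : Finset (Fin n)} :
    up y ∈ chainA C b ↔ if b then y ∈ C else y = C.inf id := by
  cases b <;> simp [chainA, up_injective.eq_iff, up_ne_upl, upl_ne_up, eq_comm (a := up y)]

lemma mem_chainA_upl {C : Finset (Finset (Fin n))} {b : Bool} {y : Finset (Fin n)} :
    upl y ∈ chainA C b ↔ if b then y = C.sup id else y ∈ C := by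
  cases b <;> simp [chainA, upl_injective.eq_iff, up_ne_upl, upl_ne_up, eq_comm (a := upl y)]

lemma mem_chainB_up {C : Finset (Finset (Fin n))} {b : Bool} {y : Finset (Fin n)} :
    up y ∈ chainB C b ↔ if b then False else y ∈ C.erase (C.inf id) := by
  cases b <;> simp [chainB, up_injective.eq_iff, up_ne_upl, upl_ne_up, eq_comm (a := up y)]

lemma mem_chainB_upl {C : Finset (Finset (Fin n))} {b : Bool} {y : Finset (Fin n)} :
    upl y ∈ chainB C b ↔ if b then y ∈ C.erase (C.sup id) else False := by
  cases b <;> simp [chainB, upl_injective.eq_iff, up_ne_upl, upl_ne_up, eq_comm (a := upl y)]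

lemma notMem_chainA_and_chainB {C : Finset (Finset (Fin n))} {b : Bool}
    {x : Finset (Fin (n+1))} (hA : x ∈ chainA C b) (hB : x ∈ chainB C b) : False := by
  by_cases hl : Fin.last n ∈ x
  · rw [eq_upl_down hl] at hA hB
    rw [mem_chainA_upl] at hA; rw [mem_chainB_upl] at hB
    cases b <;> simp_all
  · rw [eq_up_down hl] at hA hB
    rw [mem_chainA_up] at hA; rw [mem_chainB_up] at hB
    cases b <;> simp_all

lemma down_mem_of_mem_chainA {C : Finset (Finset (Fin n))} {m : ℕ} (h : ChainData n C m)
    {b : Bool} {x : Finset (Fin (n+1))} (hx : x ∈ chainA C b) : down x ∈ C := by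
  by_cases hl : Fin.last n ∈ x
  · rw [eq_upl_down hl, mem_chainA_upl] at hx
    cases b
    · simpa using hx
    · simp only [if_true] at hx
      exact hx ▸ h.sup_mem
  · rw [eq_up_down hl, mem_chainA_up] at hx
    cases b
    · simp only [Bool.false_eq_true, if_false] at hx
      exact hx ▸ h.inf_mem
    · simpa using hx

lemma down_mem_of_mem_chainB {C : Finset (Finset (Fin n))} {b : Bool}
    {x : Finset (Fin (n+1))} (hx : x ∈ chainB C b) : down x ∈ C := by
  by_cases hl : Fin.last n ∈ x
  · rw [eq_upl_down hl, mem_chainB_upl] at hx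
    cases b
    · simp at hx
    · simp only [if_true] at hx
      exact Finset.mem_of_mem_erase hx
  · rw [eq_up_down hl, mem_chainB_up] at hx
    cases b
    · simp only [Bool.false_eq_true, if_false] at hx
      exact Finset.mem_of_mem_erase hx
    · simp at hx

lemma chainA_nonempty {C : Finset (Finset (Fin n))} {m : ℕ} (h : ChainData n C m)
    (b : Bool) : up (C.inf id) ∈ chainA C b := by
  rw [mem_chainA_up]
  cases b <;> simp [h.inf_mem]

lemma chainA_mem_contrib {C : Finset (Finset (Fin n))} {m : ℕ} (h : ChainData n C m)
    (b : Bool) : chainA C b ∈ contrib C b :=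
  mem_contrib.2 ⟨Or.inl rfl, Finset.ne_empty_of_mem (chainA_nonempty h b)⟩

/-- chainA is a symmetric chain -/
lemma chainA_chainData {C : Finset (Finset (Fin n))} {m : ℕ} (h : ChainData n C m)
    (b : Bool) : ChainData (n+1) (chainA C b) m := by
  have hm := h.hm
  constructor
  · -- chain condition
    intro x hx y hy
    cases b with
    | true =>
      by_cases hlx : Fin.last n ∈ x <;> by_cases hly : Fin.last n ∈ y
      · rw [eq_upl_down hlx, mem_chainA_upl] at hx
        rw [eq_upl_down hly, mem_chainA_upl] at hy
        simp only [if_true] at hx hy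
        rw [eq_upl_down hlx, eq_upl_down hly, hx, hy]
        exact Or.inl subset_rfl
      · rw [eq_upl_down hlx, mem_chainA_upl] at hx
        rw [eq_up_down hly, mem_chainA_up] at hy
        simp only [if_true] at hx hy
        rw [eq_upl_down hlx, eq_up_down hly, hx]
        exact Or.inr (up_subset_upl (h.subset_sup hy))
      · rw [eq_up_down hlx, mem_chainA_up] at hx
        rw [eq_upl_down hly, mem_chainA_upl] at hy
        simp only [if_true] at hx hy
        rw [eq_up_down hlx, eq_upl_down hly, hy]
        exact Or.inl (up_subset_upl (h.subset_sup hx))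
      · rw [eq_up_down hlx, mem_chainA_up] at hx
        rw [eq_up_down hly, mem_chainA_up] at hy
        simp only [if_true] at hx hy
        rw [eq_up_down hlx, eq_up_down hly]
        rcases h.chain _ hx _ hy with hh | hh
        · exact Or.inl (up_subset_up hh)
        · exact Or.inr (up_subset_up hh)
    | false =>
      by_cases hlx : Fin.last n ∈ x <;> by_cases hly : Fin.last n ∈ y
      · rw [eq_upl_down hlx, mem_chainA_upl] at hx
        rw [eq_upl_down hly, mem_chainA_upl] at hy
        simp only [Bool.false_eq_true, if_false] at hx hy
        rw [eq_upl_down hlx, eq_upl_down hly]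
        rcases h.chain _ hx _ hy with hh | hh
        · exact Or.inl (upl_subset_upl hh)
        · exact Or.inr (upl_subset_upl hh)
      · rw [eq_upl_down hlx, mem_chainA_upl] at hx
        rw [eq_up_down hly, mem_chainA_up] at hy
        simp only [Bool.false_eq_true, if_false] at hx hy
        rw [eq_upl_down hlx, eq_up_down hly, hy]
        exact Or.inr (up_subset_upl (h.inf_subset hx))
      · rw [eq_up_down hlx, mem_chainA_up] at hx
        rw [eq_upl_down hly, mem_chainA_upl] at hy
        simp only [Bool.false_eq_true, if_false] at hx hy
        rw [eq_up_down hlx, eq_upl_down hly, hx]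
        exact Or.inl (up_subset_upl (h.inf_subset hy))
      · rw [eq_up_down hlx, mem_chainA_up] at hx
        rw [eq_up_down hly, mem_chainA_up] at hy
        simp only [Bool.false_eq_true, if_false] at hx hy
        rw [eq_up_down hlx, eq_up_down hly, hx, hy]
        exact Or.inl subset_rfl
  · omega
  · -- image of card
    cases b
    · show (insert (up (C.inf id)) (C.image upl)).image Finset.card = _
      rw [Finset.image_insert, Finset.image_image]
      have h1 : (C.image (Finset.card ∘ upl)) = (C.image Finset.card).image (· + 1) := by
        rw [Finset.image_image]
        exact Finset.image_congr (fun c _ => card_upl c)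
      rw [h1, h.himg, card_up, h.card_inf]
      ext j
      simp only [Finset.mem_insert, Finset.mem_image, Finset.mem_Icc]
      constructor
      · rintro (rfl | ⟨a, ⟨ha1, ha2⟩, rfl⟩) <;> omega
      · rintro ⟨h1, h2⟩
        rcases eq_or_lt_of_le h1 with rfl | hlt
        · exact Or.inl rfl
        · exact Or.inr ⟨j - 1, by omega⟩
    · show (C.image up ∪ {upl (C.sup id)}).image Finset.card = _
      rw [Finset.image_union, Finset.image_image]
      have h1 : (C.image (Finset.card ∘ up)) = C.image Finset.card :=
        Finset.image_congr (fun c _ => card_up c)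
      rw [h1, h.himg]
      simp only [Finset.image_singleton, card_upl, h.card_sup]
      ext j
      simp only [Finset.mem_union, Finset.mem_singleton, Finset.mem_Icc]
      omega

lemma chainB_empty_of_short {C : Finset (Finset (Fin n))} {m : ℕ} (h : ChainData n C m)
    (hshort : C.card ≤ 1) (b : Bool) : chainB C b = ∅ := by
  have h1 : ∀ c ∈ C, C.erase c = ∅ := by
    intro c hc
    apply Finset.card_eq_zero.1
    rw [Finset.card_erase_of_mem hc]
    omega
  cases b <;> simp [chainB, h1 _ h.inf_mem, h1 _ h.sup_mem]

lemma erase_image_card_top {C : Finset (Finset (Fin n))} {m : ℕ} (h : ChainData n C m)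
    (hlong : 2 ≤ C.card) :
    (C.erase (C.sup id)).image Finset.card = Finset.Icc m (n - m - 1) := by
  have hm := h.hm
  have hce := h.card_eq
  ext j
  simp only [Finset.mem_image, Finset.mem_Icc]
  constructor
  · rintro ⟨c, hc, rfl⟩
    have hcC := Finset.mem_of_mem_erase hc
    have h1 := Finset.mem_Icc.1 (h.card_mem hcC)
    have h2 : c.card ≠ n - m := by
      intro he
      exact (Finset.mem_erase.1 hc).1
        (card_injOn h.chain c hcC _ h.sup_mem (he.trans h.card_sup.symm))
    omega
  · rintro ⟨h1, h2⟩
    obtain ⟨c, hc, rfl⟩ := h.exists_card (Finset.mem_Icc.2 ⟨h1, by omega⟩)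
    refine ⟨c, Finset.mem_erase.2 ⟨?_, hc⟩, rfl⟩
    intro he
    rw [he, h.card_sup] at h2
    omega

lemma erase_image_card_bot {C : Finset (Finset (Fin n))} {m : ℕ} (h : ChainData n C m)
    (hlong : 2 ≤ C.card) :
    (C.erase (C.inf id)).image Finset.card = Finset.Icc (m + 1) (n - m) := by
  have hm := h.hm
  have hce := h.card_eq
  ext j
  simp only [Finset.mem_image, Finset.mem_Icc]
  constructor
  · rintro ⟨c, hc, rfl⟩
    have hcC := Finset.mem_of_mem_erase hc
    have h1 := Finset.mem_Icc.1 (h.card_mem hcC)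
    have h2 : c.card ≠ m := by
      intro he
      exact (Finset.mem_erase.1 hc).1
        (card_injOn h.chain c hcC _ h.inf_mem (he.trans h.card_inf.symm))
    omega
  · rintro ⟨h1, h2⟩
    obtain ⟨c, hc, rfl⟩ := h.exists_card (Finset.mem_Icc.2 ⟨by omega, h2⟩)
    refine ⟨c, Finset.mem_erase.2 ⟨?_, hc⟩, rfl⟩
    intro he
    rw [he, h.card_inf] at h1
    omega

/-- chainB is a symmetric chain when the chain is long -/
lemma chainB_chainData {C : Finset (Finset (Fin n))} {m : ℕ} (h : ChainData n C m)
    (hlong : 2 ≤ C.card) (b : Bool) : ChainData (n+1) (chainB C b) (m + 1) := by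
  have hm := h.hm
  have hce := h.card_eq
  constructor
  · intro x hx y hy
    cases b with
    | true =>
      by_cases hlx : Fin.last n ∈ x <;> by_cases hly : Fin.last n ∈ y
      · rw [eq_upl_down hlx, mem_chainB_upl] at hx
        rw [eq_upl_down hly, mem_chainB_upl] at hy
        simp only [if_true] at hx hy
        rw [eq_upl_down hlx, eq_upl_down hly]
        rcases h.chain _ (Finset.mem_of_mem_erase hx) _ (Finset.mem_of_mem_erase hy) with hh | hh
        · exact Or.inl (upl_subset_upl hh)
        · exact Or.inr (upl_subset_upl hh)
      · rw [eq_up_down hly, mem_chainB_up] at hy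
        simp only [if_true] at hy
      · rw [eq_up_down hlx, mem_chainB_up] at hx
        simp only [if_true] at hx
      · rw [eq_up_down hlx, mem_chainB_up] at hx
        simp only [if_true] at hx
    | false =>
      by_cases hlx : Fin.last n ∈ x <;> by_cases hly : Fin.last n ∈ y
      · rw [eq_upl_down hlx, mem_chainB_upl] at hx
        simp only [Bool.false_eq_true, if_false] at hx
      · rw [eq_upl_down hlx, mem_chainB_upl] at hx
        simp only [Bool.false_eq_true, if_false] at hx
      · rw [eq_upl_down hly, mem_chainB_upl] at hy
        simp only [Bool.false_eq_true, if_false] at hy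
      · rw [eq_up_down hlx, mem_chainB_up] at hx
        rw [eq_up_down hly, mem_chainB_up] at hy
        simp only [Bool.false_eq_true, if_false] at hx hy
        rw [eq_up_down hlx, eq_up_down hly]
        rcases h.chain _ (Finset.mem_of_mem_erase hx) _ (Finset.mem_of_mem_erase hy) with hh | hh
        · exact Or.inl (up_subset_up hh)
        · exact Or.inr (up_subset_up hh)
  · omega
  · cases b
    · show ((C.erase (C.inf id)).image up).image Finset.card = _
      rw [Finset.image_image]
      have h1 : ((C.erase (C.inf id)).image (Finset.card ∘ up))
          = (C.erase (C.inf id)).image Finset.card :=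
        Finset.image_congr (fun c _ => card_up c)
      rw [h1, erase_image_card_bot h hlong]
      congr 1
      omega
    · show ((C.erase (C.sup id)).image upl).image Finset.card = _
      rw [Finset.image_image]
      have h1 : ((C.erase (C.sup id)).image (Finset.card ∘ upl))
          = ((C.erase (C.sup id)).image Finset.card).image (· + 1) := by
        rw [Finset.image_image]
        exact Finset.image_congr (fun c _ => card_upl c)
      rw [h1, erase_image_card_top h hlong]
      rw [show Finset.image (· + 1) (Finset.Icc m (n - m - 1))
          = Finset.Icc (m + 1) (n - m - 1 + 1) from Finset.image_add_right_Icc m (n-m-1) 1]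
      congr 1
      omega


theorem extend_isSCD {P : Finset (Finset (Finset (Fin n)))}
    (hP : IsSymmetricChainDecomposition n P) (f : Finset (Finset (Fin n)) → Bool) :
    IsSymmetricChainDecomposition (n+1) (extend P f) := by
  obtain ⟨hP1, hP2⟩ := hP
  constructor
  · intro D hD
    rw [extend, Finset.mem_biUnion] at hD
    obtain ⟨C, hC, hDc⟩ := hD
    obtain ⟨m, h⟩ := isSymmetricChain_iff.1 (hP1 C hC)
    rw [mem_contrib] at hDc
    rcases hDc.1 with rfl | rfl
    · exact isSymmetricChain_iff.2 ⟨m, chainA_chainData h (f C)⟩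
    · by_cases hlong : 2 ≤ C.card
      · exact isSymmetricChain_iff.2 ⟨m + 1, chainB_chainData h hlong (f C)⟩
      · exact absurd (chainB_empty_of_short h (by omega) (f C)) hDc.2
  · intro x
    obtain ⟨C, ⟨hCP, hyC⟩, huniq⟩ := hP2 (down x)
    obtain ⟨m, h⟩ := isSymmetricChain_iff.1 (hP1 C hCP)
    have hxAB : x ∈ chainA C (f C) ∨ x ∈ chainB C (f C) := by
      by_cases hl : Fin.last n ∈ x
      · rw [eq_upl_down hl, mem_chainA_upl, mem_chainB_upl]
        cases f C
        · left; simpa using hyC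
        · by_cases he : down x = C.sup id
          · left; simpa using he
          · right; simp only [if_true]; exact Finset.mem_erase.2 ⟨he, hyC⟩
      · rw [eq_up_down hl, mem_chainA_up, mem_chainB_up]
        cases f C
        · by_cases he : down x = C.inf id
          · left; simpa using he
          · right
            simp only [Bool.false_eq_true, if_false]
            exact Finset.mem_erase.2 ⟨he, hyC⟩
        · left; simpa using hyC
    have hmemA : chainA C (f C) ∈ extend P f :=
      Finset.mem_biUnion.2 ⟨C, hCP, chainA_mem_contrib h (f C)⟩
    have key : ∀ D, D ∈ extend P f ∧ x ∈ D → (D = chainA C (f C) ∨ D = chainB C (f C)) := by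
      rintro D ⟨hD, hxD⟩
      rw [extend, Finset.mem_biUnion] at hD
      obtain ⟨C', hC', hDc⟩ := hD
      obtain ⟨m', h'⟩ := isSymmetricChain_iff.1 (hP1 C' hC')
      rw [mem_contrib] at hDc
      have hCC : C' = C := by
        apply huniq
        rcases hDc.1 with rfl | rfl
        · exact ⟨hC', down_mem_of_mem_chainA h' hxD⟩
        · exact ⟨hC', down_mem_of_mem_chainB hxD⟩
      subst hCC
      exact hDc.1
    rcases hxAB with hxA | hxB
    · refine ⟨chainA C (f C), ⟨hmemA, hxA⟩, ?_⟩
      intro D hD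
      rcases key D hD with rfl | rfl
      · rfl
      · exact (notMem_chainA_and_chainB hxA hD.2).elim
    · refine ⟨chainB C (f C),
        ⟨Finset.mem_biUnion.2 ⟨C, hCP,
          mem_contrib.2 ⟨Or.inr rfl, Finset.ne_empty_of_mem hxB⟩⟩, hxB⟩, ?_⟩
      intro D hD
      rcases key D hD with rfl | rfl
      · exact (notMem_chainA_and_chainB hD.2 hxB).elim
      · rfl

theorem exists_scd : ∀ n : ℕ, ∃ P, IsSymmetricChainDecomposition n P := by
  intro n
  induction n with
  | zero =>
    refine ⟨{{∅}}, ?_, ?_⟩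
    · intro C hC
      simp only [Finset.mem_singleton] at hC
      subst hC
      exact ⟨by simp, 0, by simp⟩
    · intro x
      refine ⟨{∅}, ⟨by simp, by simp [Finset.eq_empty_of_isEmpty x]⟩, ?_⟩
      rintro D ⟨hD, _⟩
      simpa using hD
  | succ n ih =>
    obtain ⟨P, hP⟩ := ih
    exact ⟨extend P (fun _ => true), extend_isSCD hP _⟩


/-! ### Counting -/

lemma card_long_chains {m : ℕ} (hm : 1 ≤ m) {P : Finset (Finset (Finset (Fin m)))}
    (hP : IsSymmetricChainDecomposition m P) :
    (P.filter fun C => 2 ≤ C.card).card = m.choose ((m - 1) / 2) := by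
  classical
  obtain ⟨hP1, hP2⟩ := hP
  set j := (m - 1) / 2 with hj
  have hjle : 2 * j ≤ m - 1 := by omega
  rw [show m.choose j = (Finset.powersetCard j (Finset.univ : Finset (Fin m))).card by
    rw [Finset.card_powersetCard, Finset.card_univ, Fintype.card_fin]]
  symm
  apply Finset.card_bij (fun x _ => (hP2 x).choose)
  · intro x hx
    obtain ⟨⟨hCP, hxC⟩, _⟩ := (hP2 x).choose_spec
    obtain ⟨mC, h⟩ := isSymmetricChain_iff.1 (hP1 _ hCP)
    rw [Finset.mem_powersetCard] at hx
    have h1 := Finset.mem_Icc.1 (h.card_mem hxC)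
    have h2 := h.card_eq
    have h3 := h.hm
    rw [Finset.mem_filter]
    exact ⟨hCP, by omega⟩
  · intro x hx y hy he
    obtain ⟨⟨hCP, hxC⟩, _⟩ := (hP2 x).choose_spec
    obtain ⟨⟨_, hyC⟩, _⟩ := (hP2 y).choose_spec
    rw [← he] at hyC
    obtain ⟨mC, h⟩ := isSymmetricChain_iff.1 (hP1 _ hCP)
    rw [Finset.mem_powersetCard] at hx hy
    exact card_injOn h.chain x hxC y hyC (hx.2.trans hy.2.symm)
  · intro C hC
    rw [Finset.mem_filter] at hC
    obtain ⟨hCP, hlong⟩ := hC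
    obtain ⟨mC, h⟩ := isSymmetricChain_iff.1 (hP1 _ hCP)
    have h2 := h.card_eq
    have h3 := h.hm
    have hjmem : j ∈ Finset.Icc mC (m - mC) := Finset.mem_Icc.2 ⟨by omega, by omega⟩
    obtain ⟨x, hxC, hxcard⟩ := h.exists_card hjmem
    refine ⟨x, Finset.mem_powersetCard.2 ⟨Finset.subset_univ x, hxcard⟩, ?_⟩
    obtain ⟨_, huniq⟩ := (hP2 x).choose_spec
    exact (huniq C ⟨hCP, hxC⟩).symm


lemma extend_subset_aux {P : Finset (Finset (Finset (Fin n)))}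
    (hP : IsSymmetricChainDecomposition n P)
    {S T : Finset (Finset (Finset (Fin n)))}
    (hS : S ⊆ P.filter fun C => 2 ≤ C.card) (hT : T ⊆ P.filter fun C => 2 ≤ C.card)
    (he : extend P (fun C => decide (C ∈ S)) = extend P (fun C => decide (C ∈ T))) :
    S ⊆ T := by
  intro C hCS
  by_contra hCT
  have hCfil := hS hCS
  rw [Finset.mem_filter] at hCfil
  obtain ⟨hCP, hlong⟩ := hCfil
  obtain ⟨m, h⟩ := isSymmetricChain_iff.1 (hP.1 C hCP)
  set x := up (C.inf id) with hx
  -- in extend with S, the chain containing x is chainA C true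
  have hA1 : chainA C true ∈ extend P (fun C => decide (C ∈ S)) := by
    refine Finset.mem_biUnion.2 ⟨C, hCP, ?_⟩
    show chainA C true ∈ contrib C (decide (C ∈ S))
    rw [show (decide (C ∈ S)) = true by simp [hCS]]
    exact chainA_mem_contrib h true
  have hA2 : chainA C false ∈ extend P (fun C => decide (C ∈ T)) := by
    refine Finset.mem_biUnion.2 ⟨C, hCP, ?_⟩
    show chainA C false ∈ contrib C (decide (C ∈ T))
    rw [show (decide (C ∈ T)) = false by simp [hCT]]
    exact chainA_mem_contrib h false
  have hx1 : x ∈ chainA C true := chainA_nonempty h true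
  have hx2 : x ∈ chainA C false := chainA_nonempty h false
  rw [he] at hA1
  -- uniqueness in the decomposition extend P (· ∈ T)
  have hdec := extend_isSCD hP (fun C => decide (C ∈ T))
  obtain ⟨D, -, huniq⟩ := hdec.2 x
  have e1 := huniq _ ⟨hA1, hx1⟩
  have e2 := huniq _ ⟨hA2, hx2⟩
  have eAA : chainA C true = chainA C false := e1.trans e2.symm
  -- but up (C.sup id) distinguishes them
  have hsup1 : up (C.sup id) ∈ chainA C true := by
    rw [mem_chainA_up]; simpa using h.sup_mem
  have hsup2 : up (C.sup id) ∉ chainA C false := by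
    rw [mem_chainA_up]
    simpa using fun hh => h.inf_ne_sup_of_long hlong hh.symm
  rw [eAA] at hsup1
  exact hsup2 hsup1

theorem main_card_bound (n : ℕ) (hn : 2 ≤ n) :
    2 ^ ((n - 1).choose ((n - 2) / 2)) ≤
      Nat.card {P : Finset (Finset (Finset (Fin n))) //
        IsSymmetricChainDecomposition n P} := by
  classical
  obtain ⟨m, rfl⟩ : ∃ m, n = m + 1 := ⟨n - 1, by omega⟩
  have hm : 1 ≤ m := by omega
  obtain ⟨P, hP⟩ := exists_scd m
  set L := P.filter (fun C => 2 ≤ C.card) with hL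
  have hcard : L.card = m.choose ((m - 1) / 2) := card_long_chains hm hP
  -- injection from subsets of L
  let g : {S // S ∈ L.powerset} → {Q : Finset (Finset (Finset (Fin (m+1)))) //
      IsSymmetricChainDecomposition (m+1) Q} :=
    fun S => ⟨extend P (fun C => decide (C ∈ S.1)), extend_isSCD hP _⟩
  have hginj : Function.Injective g := by
    intro S T hST
    have hST' : extend P (fun C => decide (C ∈ S.1)) = extend P (fun C => decide (C ∈ T.1)) :=
      congrArg Subtype.val hST
    have h1 : S.1 ⊆ L := Finset.mem_powerset.1 S.2
    have h2 : T.1 ⊆ L := Finset.mem_powerset.1 T.2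
    exact Subtype.ext (Finset.Subset.antisymm
      (extend_subset_aux hP h1 h2 hST') (extend_subset_aux hP h2 h1 hST'.symm))
  have := Nat.card_le_card_of_injective g hginj
  have hcount : Nat.card {S // S ∈ L.powerset} = 2 ^ L.card := by
    rw [Nat.card_eq_fintype_card, Fintype.card_coe, Finset.card_powerset]
  rw [hcount, hcard] at this
  have heq : (m + 1 - 1).choose ((m + 1 - 2) / 2) = m.choose ((m - 1) / 2) := by
    congr 1 <;> omega
  rw [heq]
  exact this



lemma choose_ge_centralBinom {n : ℕ} (hn : 2 ≤ n) :
    Nat.centralBinom ((n - 2) / 2) ≤ (n - 1).choose ((n - 2) / 2) := by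
  obtain ⟨k, hk⟩ : ∃ k, n = 2 * k + 2 ∨ n = 2 * k + 3 := ⟨(n - 2) / 2, by omega⟩
  rcases hk with rfl | rfl
  · have h1 : (2 * k + 2 - 2) / 2 = k := by omega
    have h2 : 2 * k + 2 - 1 = 2 * k + 1 := by omega
    rw [h1, h2, Nat.centralBinom]
    exact Nat.choose_le_choose k (by omega)
  · have h1 : (2 * k + 3 - 2) / 2 = k := by omega
    have h2 : 2 * k + 3 - 1 = 2 * k + 2 := by omega
    rw [h1, h2]
    have key : (2 * k + 2).choose (k + 1) ≤ 2 * (2 * k + 2).choose k := by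
      have hr := Nat.choose_succ_right_eq (2 * k + 2) k
      have h3 : 2 * k + 2 - k = k + 2 := by omega
      rw [h3] at hr
      have : (2 * k + 2).choose (k + 1) * (k + 1) ≤ 2 * (2 * k + 2).choose k * (k + 1) := by
        rw [hr]; nlinarith [Nat.choose_pos (show k ≤ 2*k+2 by omega)]
      exact Nat.le_of_mul_le_mul_right this (by omega)
    have hcb : 2 * Nat.centralBinom k ≤ Nat.centralBinom (k + 1) := by
      have h4 := Nat.succ_mul_centralBinom_succ k
      have h5 : (k + 1) * (2 * Nat.centralBinom k) ≤ (k + 1) * Nat.centralBinom (k + 1) := by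
        rw [h4]; nlinarith [Nat.centralBinom_pos k]
      exact Nat.le_of_mul_le_mul_left h5 (by omega)
    have hceq : Nat.centralBinom (k + 1) = (2 * k + 2).choose (k + 1) := by
      rw [Nat.centralBinom, show 2 * (k + 1) = 2 * k + 2 by omega]
    omega

lemma four_pow_le_sqrt_mul_centralBinom {k : ℕ} (hk : 1 ≤ k) :
    (4 : ℝ) ^ k ≤ 2 * Real.sqrt k * Nat.centralBinom k := by
  induction k, hk using Nat.le_induction with
  | base =>
    have h1 : Nat.centralBinom 1 = 2 := by decide
    rw [h1]
    norm_num
  | succ k hk ih =>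
    have h0 := Nat.succ_mul_centralBinom_succ k
    have hrec : ((k : ℝ) + 1) * Nat.centralBinom (k + 1)
        = 2 * (2 * (k : ℝ) + 1) * Nat.centralBinom k := by exact_mod_cast h0
    push_cast
    set a := Real.sqrt k with ha
    set b := Real.sqrt ((k : ℝ) + 1) with hb
    have ha2 : a ^ 2 = k := Real.sq_sqrt (by positivity)
    have hb2 : b ^ 2 = (k : ℝ) + 1 := Real.sq_sqrt (by positivity)
    have ha0 : 0 ≤ a := Real.sqrt_nonneg _
    have hb0 : 0 ≤ b := Real.sqrt_nonneg _
    have hcbk : (0 : ℝ) ≤ Nat.centralBinom k := by positivity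
    have key : 2 * ((k : ℝ) + 1) * a ≤ (2 * (k : ℝ) + 1) * b := by
      nlinarith [sq_nonneg (a - b), mul_nonneg ha0 hb0]
    have hk1 : (0 : ℝ) < (k : ℝ) + 1 := by positivity
    have step : (4 : ℝ) ^ (k + 1) * ((k : ℝ) + 1)
        ≤ 2 * b * Nat.centralBinom (k + 1) * ((k : ℝ) + 1) := by
      have h3 := mul_le_mul_of_nonneg_right ih (le_of_lt hk1)
      have h2 : (4 : ℝ) ^ (k + 1) * ((k : ℝ) + 1)
          ≤ 4 * (2 * a * Nat.centralBinom k) * ((k : ℝ) + 1) := by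
        calc (4 : ℝ) ^ (k + 1) * ((k : ℝ) + 1) = 4 * (4 ^ k * ((k : ℝ) + 1)) := by ring
          _ ≤ 4 * (2 * a * Nat.centralBinom k * ((k : ℝ) + 1)) := by linarith
          _ = 4 * (2 * a * Nat.centralBinom k) * ((k : ℝ) + 1) := by ring
      refine h2.trans ?_
      have h4 : 2 * b * (Nat.centralBinom (k + 1) : ℝ) * ((k : ℝ) + 1)
          = 2 * b * (2 * (2 * (k : ℝ) + 1) * Nat.centralBinom k) := by
        rw [← hrec]; ring
      rw [h4]
      nlinarith [mul_le_mul_of_nonneg_right key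
        (by positivity : (0 : ℝ) ≤ 4 * (Nat.centralBinom k : ℝ))]
    exact le_of_mul_le_mul_right step hk1


end SCD

/-- `2^[n]` has at least `2^(C(n-1,⌊(n-2)/2⌋))` symmetric chain
decompositions; in particular, at least `2^(Ω(2^n/√n))` of them. -/
theorem stmt_5 :
    (∀ n : ℕ, 2 ≤ n →
      2 ^ ((n - 1).choose ((n - 2) / 2)) ≤
        Nat.card {P : Finset (Finset (Finset (Fin n))) //
          IsSymmetricChainDecomposition n P}) ∧
    ∃ c : ℝ, 0 < c ∧ ∃ N : ℕ, ∀ n : ℕ, N ≤ n →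
      (2 : ℝ) ^ (c * 2 ^ n / Real.sqrt n) ≤
        (Nat.card {P : Finset (Finset (Finset (Fin n))) //
          IsSymmetricChainDecomposition n P} : ℝ) := by
  constructor
  · exact fun n hn => SCD.main_card_bound n hn
  · refine ⟨1/16, by norm_num, 4, fun n hn => ?_⟩
    have hn2 : 2 ≤ n := by omega
    have hk1 : 1 ≤ (n - 2) / 2 := by omega
    have hb := SCD.choose_ge_centralBinom hn2
    have hcb := SCD.four_pow_le_sqrt_mul_centralBinom hk1
    have hsk : Real.sqrt ((n - 2) / 2 : ℕ) ≤ Real.sqrt n :=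
      Real.sqrt_le_sqrt (Nat.cast_le.2 (by omega))
    have hskpos : (0:ℝ) < Real.sqrt ((n - 2) / 2 : ℕ) :=
      Real.sqrt_pos.2 (by exact_mod_cast Nat.pos_of_ne_zero (by omega))
    have hsnpos : (0:ℝ) < Real.sqrt n :=
      Real.sqrt_pos.2 (by exact_mod_cast Nat.pos_of_ne_zero (by omega))
    have h2n : (2:ℝ) ^ n ≤ 8 * 4 ^ ((n - 2) / 2) := by
      have h4 : (4:ℝ) ^ ((n - 2) / 2) = 2 ^ (2 * ((n - 2) / 2)) := by
        rw [show (4:ℝ) = 2 ^ 2 by norm_num, ← pow_mul]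
      rw [h4]
      calc (2:ℝ) ^ n ≤ 2 ^ (2 * ((n - 2) / 2) + 3) :=
            pow_le_pow_right₀ one_le_two (by omega)
        _ = 8 * 2 ^ (2 * ((n - 2) / 2)) := by rw [pow_add]; ring
    have hcbnn : (0:ℝ) ≤ (Nat.centralBinom ((n - 2) / 2) : ℝ) := by positivity
    have hX : 1 / 16 * 2 ^ n / Real.sqrt n ≤ (Nat.centralBinom ((n - 2) / 2) : ℝ) := by
      rw [div_le_iff₀ hsnpos]
      have haux := mul_le_mul_of_nonneg_right hsk hcbnn
      nlinarith [hcb, h2n, haux]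
    have hXb : 1 / 16 * 2 ^ n / Real.sqrt n ≤ (((n - 1).choose ((n - 2) / 2) : ℕ) : ℝ) :=
      hX.trans (Nat.cast_le.2 hb)
    calc (2:ℝ) ^ (1 / 16 * 2 ^ n / Real.sqrt n)
        ≤ (2:ℝ) ^ ((((n - 1).choose ((n - 2) / 2) : ℕ) : ℝ)) :=
          Real.rpow_le_rpow_of_exponent_le one_le_two hXb
      _ = ((2 ^ ((n - 1).choose ((n - 2) / 2)) : ℕ) : ℝ) := by
          rw [Real.rpow_natCast]; push_cast; ring
      _ ≤ _ := Nat.cast_le.2 (SCD.main_card_bound n hn2)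
end

section
/- Let (P, <) be a graded poset with levels A₀, ..., A_n. For each k, let G_k be the bipartite graph on (A_k, A_{k+1}) joining x ∈ A_k to y ∈ A_{k+1} when x < y. If each G_k (k = 0,...,n−1) is a normalized matching graph, then P is a normalized matching poset: for all i ≠ j and all X ⊆ A_i, |X|/|A_i| ≤ |Γ(X)|/|A_j|, where Γ(X) is the set of elements of A_j comparable to some element of X. -/
section aux
variable {P : Type*} [Fintype P] [PartialOrder P] (rank : P → ℕ)

lemma rank_lt_of_lt (hcov : ∀ x y : P, x ⋖ y → rank y = rank x + 1) :
    ∀ y x : P, x < y → rank x < rank y := by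
  intro y
  induction y using WellFoundedLT.induction with
  | ind y ih =>
    intro x hxy
    obtain ⟨z, hxz, hzy⟩ := exists_le_covBy_of_lt hxy
    have hz := hcov z y hzy
    rcases eq_or_lt_of_le hxz with rfl | h
    · omega
    · have := ih z hzy.lt x h; omega

lemma level_below (hmin : ∀ x : P, IsMin x → rank x = 0)
    (hcov : ∀ x y : P, x ⋖ y → rank y = rank x + 1)
    {m : ℕ} (y : P) (hy : rank y = m + 1) : ∃ z : P, rank z = m ∧ z < y := by
  have hnm : ¬ IsMin y := fun h => by simp [hmin y h] at hy
  obtain ⟨w, hw⟩ := not_isMin_iff.1 hnm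
  obtain ⟨z, hwz, hzy⟩ := exists_le_covBy_of_lt hw
  have := hcov z y hzy
  exact ⟨z, by omega, hzy.lt⟩

/-- Upward normalized matching over a distance `d + 1`. -/
lemma nm_up (hmin : ∀ x : P, IsMin x → rank x = 0)
    (hcov : ∀ x y : P, x ⋖ y → rank y = rank x + 1)
    (hnm : ∀ k : ℕ, ∀ X ⊆ {x : P | rank x = k},
      X.ncard * {y : P | rank y = k + 1}.ncard ≤
        {y : P | rank y = k + 1 ∧ ∃ x ∈ X, x < y}.ncard * {x : P | rank x = k}.ncard) :
    ∀ d i : ℕ, ∀ X ⊆ {x : P | rank x = i},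
      X.ncard * {y : P | rank y = i + d + 1}.ncard ≤
        {y : P | rank y = i + d + 1 ∧ ∃ x ∈ X, x < y}.ncard * {x : P | rank x = i}.ncard := by
  intro d
  induction d with
  | zero => intro i X hX; exact hnm i X hX
  | succ d ih =>
    intro i X hX
    set Y : Set P := {y : P | rank y = i + d + 1 ∧ ∃ x ∈ X, x < y} with hYdef
    have hY : Y ⊆ {y : P | rank y = i + d + 1} := fun y hy => hy.1
    have h1 := ih i X hX
    have h2 := hnm (i + d + 1) Y hY
    have hsub : {y : P | rank y = i + d + 1 + 1 ∧ ∃ x ∈ Y, x < y} ⊆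
        {y : P | rank y = i + (d + 1) + 1 ∧ ∃ x ∈ X, x < y} := by
      rintro y ⟨hy, b, ⟨hb, x, hx, hxb⟩, hby⟩
      exact ⟨by omega, x, hx, hxb.trans hby⟩
    have h3 := Set.ncard_le_ncard hsub (Set.toFinite _)
    rcases Nat.eq_zero_or_pos {y : P | rank y = i + d + 1}.ncard with h0 | hpos
    · have : {y : P | rank y = i + (d + 1) + 1}.ncard = 0 := by
        rw [Set.ncard_eq_zero (Set.toFinite _)] at h0 ⊢
        by_contra h
        obtain ⟨y, hy⟩ := Set.nonempty_iff_ne_empty.2 h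
        obtain ⟨z, hz, -⟩ := level_below rank hmin hcov (m := i + d + 1) y (by simp only [Set.mem_setOf_eq] at hy; omega)
        exact absurd h0 (Set.nonempty_iff_ne_empty.1 ⟨z, hz⟩)
      rw [this]; simp
    · have key : X.ncard * {y : P | rank y = i + (d + 1) + 1}.ncard *
          {y : P | rank y = i + d + 1}.ncard ≤
          {y : P | rank y = i + (d + 1) + 1 ∧ ∃ x ∈ X, x < y}.ncard *
            {x : P | rank x = i}.ncard * {y : P | rank y = i + d + 1}.ncard := by
        have e1 : i + d + 1 + 1 = i + (d + 1) + 1 := by omega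
        rw [e1] at h2
        calc X.ncard * {y : P | rank y = i + (d + 1) + 1}.ncard *
              {y : P | rank y = i + d + 1}.ncard
            = (X.ncard * {y : P | rank y = i + d + 1}.ncard) *
              {y : P | rank y = i + (d + 1) + 1}.ncard := by ring
          _ ≤ (Y.ncard * {x : P | rank x = i}.ncard) *
              {y : P | rank y = i + (d + 1) + 1}.ncard :=
              Nat.mul_le_mul_right _ h1
          _ = (Y.ncard * {y : P | rank y = i + (d + 1) + 1}.ncard) *
              {x : P | rank x = i}.ncard := by ring
          _ ≤ ({y : P | rank y = i + (d + 1) + 1 ∧ ∃ x ∈ Y, x < y}.ncard *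
              {y : P | rank y = i + d + 1}.ncard) * {x : P | rank x = i}.ncard :=
              Nat.mul_le_mul_right _ h2
          _ ≤ ({y : P | rank y = i + (d + 1) + 1 ∧ ∃ x ∈ X, x < y}.ncard *
              {y : P | rank y = i + d + 1}.ncard) * {x : P | rank x = i}.ncard := by
              refine Nat.mul_le_mul_right _ (Nat.mul_le_mul_right _ ?_)
              have e2 : {y : P | rank y = i + (d + 1) + 1 ∧ ∃ x ∈ Y, x < y} =
                  {y : P | rank y = i + d + 1 + 1 ∧ ∃ x ∈ Y, x < y} := by
                ext y; constructor <;> rintro ⟨h, hh⟩ <;> exact ⟨by omega, hh⟩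
              rw [e2]; exact h3
          _ = {y : P | rank y = i + (d + 1) + 1 ∧ ∃ x ∈ X, x < y}.ncard *
              {x : P | rank x = i}.ncard * {y : P | rank y = i + d + 1}.ncard := by ring
      exact Nat.le_of_mul_le_mul_right key hpos

/-- Downward normalized matching between consecutive levels. -/
lemma nm_down_step
    (hnm : ∀ k : ℕ, ∀ X ⊆ {x : P | rank x = k},
      X.ncard * {y : P | rank y = k + 1}.ncard ≤
        {y : P | rank y = k + 1 ∧ ∃ x ∈ X, x < y}.ncard * {x : P | rank x = k}.ncard) :
    ∀ k : ℕ, ∀ Y ⊆ {y : P | rank y = k + 1},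
      Y.ncard * {x : P | rank x = k}.ncard ≤
        {x : P | rank x = k ∧ ∃ y ∈ Y, x < y}.ncard * {y : P | rank y = k + 1}.ncard := by
  intro k Y hY
  set S : Set P := {x : P | rank x = k ∧ ∃ y ∈ Y, x < y} with hS
  set X : Set P := {x : P | rank x = k} \ S with hXdef
  have hX : X ⊆ {x : P | rank x = k} := Set.diff_subset
  have h1 := hnm k X hX
  have hsub : {y : P | rank y = k + 1 ∧ ∃ x ∈ X, x < y} ⊆ {y : P | rank y = k + 1} \ Y := by
    rintro y ⟨hy, x, hx, hxy⟩
    refine ⟨hy, fun hyY => hx.2 ⟨hx.1, y, hyY, hxy⟩⟩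
  have h2 : {y : P | rank y = k + 1 ∧ ∃ x ∈ X, x < y}.ncard ≤
      ({y : P | rank y = k + 1} \ Y).ncard := Set.ncard_le_ncard hsub (Set.toFinite _)
  have hSsub : S ⊆ {x : P | rank x = k} := fun x hx => hx.1
  have hXcard : X.ncard = {x : P | rank x = k}.ncard - S.ncard :=
    Set.ncard_diff hSsub (Set.toFinite _)
  have hYcard : ({y : P | rank y = k + 1} \ Y).ncard =
      {y : P | rank y = k + 1}.ncard - Y.ncard := Set.ncard_diff hY (Set.toFinite _)
  have hs : S.ncard ≤ {x : P | rank x = k}.ncard :=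
    Set.ncard_le_ncard hSsub (Set.toFinite _)
  have hy : Y.ncard ≤ {y : P | rank y = k + 1}.ncard :=
    Set.ncard_le_ncard hY (Set.toFinite _)
  set a := {x : P | rank x = k}.ncard
  set b := {y : P | rank y = k + 1}.ncard
  have h3 : (a - S.ncard) * b ≤ (b - Y.ncard) * a := by
    calc (a - S.ncard) * b = X.ncard * b := by rw [hXcard]
      _ ≤ {y : P | rank y = k + 1 ∧ ∃ x ∈ X, x < y}.ncard * a := h1
      _ ≤ (b - Y.ncard) * a := by rw [← hYcard]; exact Nat.mul_le_mul_right _ h2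
  zify [hs, hy] at h3
  nlinarith [h3]

/-- Downward normalized matching over a distance `d + 1`. -/
lemma nm_down (hmin : ∀ x : P, IsMin x → rank x = 0)
    (hcov : ∀ x y : P, x ⋖ y → rank y = rank x + 1)
    (hstep : ∀ k : ℕ, ∀ Y ⊆ {y : P | rank y = k + 1},
      Y.ncard * {x : P | rank x = k}.ncard ≤
        {x : P | rank x = k ∧ ∃ y ∈ Y, x < y}.ncard * {y : P | rank y = k + 1}.ncard) :
    ∀ d j : ℕ, ∀ Y ⊆ {y : P | rank y = j + d + 1},
      Y.ncard * {x : P | rank x = j}.ncard ≤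
        {x : P | rank x = j ∧ ∃ y ∈ Y, x < y}.ncard * {y : P | rank y = j + d + 1}.ncard := by
  intro d
  induction d with
  | zero => intro j Y hY; exact hstep j Y hY
  | succ d ih =>
    intro j Y hY
    rcases Y.eq_empty_or_nonempty with rfl | ⟨y0, hy0⟩
    · simp
    set S : Set P := {x : P | rank x = j + d + 1 ∧ ∃ y ∈ Y, x < y} with hSdef
    have hS : S ⊆ {x : P | rank x = j + d + 1} := fun x hx => hx.1
    have hY' : Y ⊆ {y : P | rank y = j + d + 1 + 1} := by
      intro y hyy; have := hY hyy; simp only [Set.mem_setOf_eq] at this ⊢; omega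
    have h1 := hstep (j + d + 1) Y hY'
    have h2 := ih j S hS
    have hsub : {x : P | rank x = j ∧ ∃ s ∈ S, x < s} ⊆
        {x : P | rank x = j ∧ ∃ y ∈ Y, x < y} := by
      rintro x ⟨hx, s, ⟨hs, y, hyY, hsy⟩, hxs⟩
      exact ⟨hx, y, hyY, hxs.trans hsy⟩
    have h3 := Set.ncard_le_ncard hsub (Set.toFinite _)
    have hpos : 0 < {x : P | rank x = j + d + 1}.ncard := by
      obtain ⟨z, hz, -⟩ := level_below rank hmin hcov (m := j + d + 1) y0
        (by have := hY hy0; simp only [Set.mem_setOf_eq] at this; omega)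
      exact (Set.ncard_pos (Set.toFinite _)).2 ⟨z, hz⟩
    have e1 : j + (d + 1) + 1 = j + d + 1 + 1 := by omega
    rw [e1]
    refine Nat.le_of_mul_le_mul_right ?_ hpos
    calc Y.ncard * {x : P | rank x = j}.ncard * {x : P | rank x = j + d + 1}.ncard
        = (Y.ncard * {x : P | rank x = j + d + 1}.ncard) * {x : P | rank x = j}.ncard := by
          ring
      _ ≤ (S.ncard * {y : P | rank y = j + d + 1 + 1}.ncard) * {x : P | rank x = j}.ncard :=
          Nat.mul_le_mul_right _ h1
      _ = (S.ncard * {x : P | rank x = j}.ncard) * {y : P | rank y = j + d + 1 + 1}.ncard := by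
          ring
      _ ≤ ({x : P | rank x = j ∧ ∃ s ∈ S, x < s}.ncard * {x : P | rank x = j + d + 1}.ncard) *
          {y : P | rank y = j + d + 1 + 1}.ncard := Nat.mul_le_mul_right _ h2
      _ ≤ ({x : P | rank x = j ∧ ∃ y ∈ Y, x < y}.ncard * {x : P | rank x = j + d + 1}.ncard) *
          {y : P | rank y = j + d + 1 + 1}.ncard :=
          Nat.mul_le_mul_right _ (Nat.mul_le_mul_right _ h3)
      _ = {x : P | rank x = j ∧ ∃ y ∈ Y, x < y}.ncard * {y : P | rank y = j + d + 1 + 1}.ncard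
          * {x : P | rank x = j + d + 1}.ncard := by ring
end aux

/-- Let `P` be a finite graded poset with rank function `rank` (levels
`A_k = {x | rank x = k}`, `k ≤ n`). If for each `k` the bipartite comparability graph
between consecutive levels `A_k` and `A_{k+1}` is a normalized matching graph, then
`P` is a normalized matching poset: for all `i ≠ j` and `X ⊆ A_i`,
`|X|/|A_i| ≤ |Γ(X)|/|A_j|`. -/
theorem stmt_7 {P : Type*} [Fintype P] [PartialOrder P] (n : ℕ) (rank : P → ℕ)
    (hle : ∀ x, rank x ≤ n)
    (hmin : ∀ x : P, IsMin x → rank x = 0)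
    (hcov : ∀ x y : P, x ⋖ y → rank y = rank x + 1)
    (hnm : ∀ k : ℕ, ∀ X ⊆ {x : P | rank x = k},
      X.ncard * {y : P | rank y = k + 1}.ncard ≤
        {y : P | rank y = k + 1 ∧ ∃ x ∈ X, x < y}.ncard * {x : P | rank x = k}.ncard) :
    ∀ i j : ℕ, i ≤ n → j ≤ n → i ≠ j → ∀ X ⊆ {x : P | rank x = i},
      X.ncard * {y : P | rank y = j}.ncard ≤
        {y : P | rank y = j ∧ ∃ x ∈ X, x < y ∨ y < x}.ncard *
          {x : P | rank x = i}.ncard := by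
  intro i j hi hj hne X hX
  rcases lt_or_gt_of_ne hne with hij | hij
  · -- upward: j = i + (j - i - 1) + 1
    have e : j = i + (j - i - 1) + 1 := by omega
    have h := nm_up rank hmin hcov hnm (j - i - 1) i X hX
    rw [← e] at h
    refine h.trans (Nat.mul_le_mul_right _ (Set.ncard_le_ncard ?_ (Set.toFinite _)))
    rintro y ⟨hy, x, hx, hxy⟩
    exact ⟨hy, x, hx, Or.inl hxy⟩
  · -- downward: i = j + (i - j - 1) + 1
    have e : i = j + (i - j - 1) + 1 := by omega
    have hX' : X ⊆ {y : P | rank y = j + (i - j - 1) + 1} := by rwa [← e]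
    have h := nm_down rank hmin hcov (nm_down_step rank hnm) (i - j - 1) j X hX'
    rw [← e] at h
    refine h.trans (Nat.mul_le_mul_right _ (Set.ncard_le_ncard ?_ (Set.toFinite _)))
    rintro y ⟨hy, x, hx, hyx⟩
    exact ⟨hy, x, hx, Or.inr hyx⟩
end

section
/- For any x ⊆ [n] and i ∈ [n], if the pair pr_x(i) = j exists (in the signature construction), then pr_x(j) exists and equals i; moreover sg(x)_i = 1 − sg(x)_j, i.e., exactly one of i, j belongs to x. -/
/-- `c_x(i,j) = |x ∩ [i,j]| - |[i,j] \ x|`. -/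
def cfun (x : Finset ℕ) (i j : ℕ) : ℤ :=
  ((Finset.Icc i j ∩ x).card : ℤ) - ((Finset.Icc i j \ x).card : ℤ)


lemma cfun_sum (x : Finset ℕ) (i j : ℕ) :
    cfun x i j = ∑ k ∈ Finset.Icc i j, (if k ∈ x then (1:ℤ) else -1) := by
  rw [Finset.sum_ite, Finset.sum_const, Finset.sum_const, Finset.filter_mem_eq_inter, cfun]
  simp [Finset.sdiff_eq_filter, sub_eq_add_neg]

lemma cfun_split (x : Finset ℕ) (i m j : ℕ) (h1 : i ≤ m + 1) (h2 : m ≤ j) :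
    cfun x i j = cfun x i m + cfun x (m+1) j := by
  rw [cfun_sum, cfun_sum, cfun_sum, ← Finset.sum_union]
  · congr 1
    ext k; simp only [Finset.mem_union, Finset.mem_Icc]; omega
  · simp only [Finset.disjoint_left, Finset.mem_Icc]; intro a h1 h2; omega

lemma cfun_self (x : Finset ℕ) (i : ℕ) :
    cfun x i i = if i ∈ x then 1 else -1 := by
  rw [cfun_sum]; simp

lemma cfun_pos (x : Finset ℕ) (i : ℕ) (hi : i ∈ x) :
    ∀ j, i ≤ j → (∀ j', i < j' → j' ≤ j → cfun x i j' ≠ 0) → 1 ≤ cfun x i j := by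
  intro j
  induction j with
  | zero => intro h _; interval_cases i; simp [cfun_self, hi]
  | succ j ih =>
    intro hij hne
    rcases Nat.lt_or_ge i (j+1) with h | h
    · have h1 : 1 ≤ cfun x i j := ih (by omega) (fun j' a b => hne j' a (by omega))
      have h2 : cfun x i (j+1) = cfun x i j + cfun x (j+1) (j+1) :=
        cfun_split x i j (j+1) (by omega) (by omega)
      have h3 := cfun_self x (j+1)
      have h4 := hne (j+1) h (le_refl _)
      by_cases hm : (j+1) ∈ x <;> simp [hm] at h3 <;> omega
    · have : i = j + 1 := by omega
      subst this; simp [cfun_self, hi]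

lemma cfun_neg (x : Finset ℕ) (i : ℕ) (hi : i ∉ x) :
    ∀ d j, j + d = i → (∀ j', j ≤ j' → j' < i → cfun x j' i ≠ 0) → cfun x j i ≤ -1 := by
  intro d
  induction d with
  | zero =>
    intro j h _
    have hji : i = j := by omega
    subst hji
    rw [cfun_self, if_neg hi]
  | succ d ih =>
    intro j hji hne
    have h1 : cfun x (j+1) i ≤ -1 := ih (j+1) (by omega) (fun j' a b => hne j' (by omega) b)
    have h2 : cfun x j i = cfun x j j + cfun x (j+1) i :=
      cfun_split x j j i (by omega) (by omega)
    have h3 := cfun_self x j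
    have h4 := hne j (le_refl _) (by omega)
    by_cases hm : j ∈ x <;> simp [hm] at h3 <;> omega

/-- in the signature construction, if `j = pr_x(i)` exists then
`pr_x(j)` exists and equals `i`, and exactly one of `i`, `j` belongs to `x`
(`sg(x)_i = 1 - sg(x)_j`). Both cases (`i ∈ x` and `i ∉ x`) are stated. -/
theorem stmt_8 (n : ℕ) (x : Finset ℕ) (hx : x ⊆ Finset.Icc 1 n)
    (i j : ℕ) (hi : i ∈ Finset.Icc 1 n) :
    ((i ∈ x ∧ IsLeast {j' | i < j' ∧ j' ≤ n ∧ cfun x i j' = 0} j) →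
      (j ∉ x ∧ IsGreatest {i' | 1 ≤ i' ∧ i' < j ∧ cfun x i' j = 0} i)) ∧
    ((i ∉ x ∧ IsGreatest {j' | 1 ≤ j' ∧ j' < i ∧ cfun x j' i = 0} j) →
      (j ∈ x ∧ IsLeast {i' | j < i' ∧ i' ≤ n ∧ cfun x j i' = 0} i)) := by
  rw [Finset.mem_Icc] at hi
  obtain ⟨hi1, hin⟩ := hi
  constructor
  · rintro ⟨hix, ⟨⟨hij, hjn, hc0⟩, hlb⟩⟩
    -- minimality: no zero strictly between i and j
    have hne : ∀ j', i < j' → j' < j → cfun x i j' ≠ 0 := by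
      intro j' h1 h2 h0
      have := hlb ⟨h1, by omega, h0⟩
      omega
    have hjx : j ∉ x := by
      have hpos : 1 ≤ cfun x i (j-1) :=
        cfun_pos x i hix (j-1) (by omega) (fun j' a b => hne j' a (by omega))
      have hsplit : cfun x i j = cfun x i (j-1) + cfun x ((j-1)+1) j :=
        cfun_split x i (j-1) j (by omega) (by omega)
      have hjj : (j-1)+1 = j := by omega
      rw [hjj, cfun_self] at hsplit
      intro hjx
      rw [if_pos hjx] at hsplit
      omega
    refine ⟨hjx, ⟨⟨hi1, hij, hc0⟩, ?_⟩⟩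
    rintro i' ⟨hi'1, hi'j, hc0'⟩
    by_contra hlt
    push_neg at hlt
    have hsplit : cfun x i j = cfun x i (i'-1) + cfun x ((i'-1)+1) j :=
      cfun_split x i (i'-1) j (by omega) (by omega)
    have hii : (i'-1)+1 = i' := by omega
    rw [hii] at hsplit
    have hz : cfun x i (i'-1) = 0 := by omega
    have hpos : 1 ≤ cfun x i (i'-1) :=
      cfun_pos x i hix (i'-1) (by omega) (fun j' a b => hne j' a (by omega))
    omega
  · rintro ⟨hix, ⟨⟨hj1, hji, hc0⟩, hub⟩⟩
    have hne : ∀ j', j < j' → j' < i → cfun x j' i ≠ 0 := by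
      intro j' h1 h2 h0
      have := hub ⟨by omega, h2, h0⟩
      omega
    have hjx : j ∈ x := by
      have hneg : cfun x (j+1) i ≤ -1 :=
        cfun_neg x i hix (i-(j+1)) (j+1) (by omega) (fun j' a b => hne j' (by omega) b)
      have hsplit : cfun x j i = cfun x j j + cfun x (j+1) i :=
        cfun_split x j j i (by omega) (by omega)
      rw [cfun_self] at hsplit
      by_contra hjx
      rw [if_neg hjx] at hsplit
      omega
    refine ⟨hjx, ⟨⟨hji, hin, hc0⟩, ?_⟩⟩
    rintro i' ⟨hji', hi'n, hc0'⟩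
    by_contra hlt
    push_neg at hlt
    have hsplit : cfun x j i = cfun x j i' + cfun x (i'+1) i :=
      cfun_split x j i' i (by omega) (by omega)
    have hz : cfun x (i'+1) i = 0 := by omega
    have hneg : cfun x (i'+1) i ≤ -1 :=
      cfun_neg x i hix (i-(i'+1)) (i'+1) (by omega) (fun j' a b => hne j' (by omega) b)
    omega
end

section
/- Define x ∼ y for x, y ⊆ [n] if sg(x) = sg(y). Then each equivalence class of ∼ is a symmetric chain in 2^[n]; explicitly, if *(x) has elements i₁ < ... < i_t, the class of x consists of the sets 1(x) ∪ {i_{u+1},...,i_t} for u = 0,...,t, where 1(x) = {i : sg(x)_i = 1}, and these have sizes (n+t)/2 − u. Consequently the equivalence classes of ∼ form a partition of 2^[n] into C(n, ⌊n/2⌋) symmetric chains. -/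
-- The signature value of position `i` in `x ⊆ [n]`: `1`, `0`, or `2` (for `*`).
open Classical in
noncomputable def sgv (n : ℕ) (x : Finset ℕ) (i : ℕ) : ℕ :=
  if i ∈ x then (if ∃ j ∈ Finset.Ioc i n, cfun x i j = 0 then 1 else 2)
  else (if ∃ j ∈ Finset.Ico 1 i, cfun x j i = 0 then 0 else 2)

open Finset

def Gf (x : Finset ℕ) (k : ℕ) : ℤ := cfun x 1 k

lemma cfun_eq_sum (x : Finset ℕ) (i j : ℕ) :
    cfun x i j = ∑ k ∈ Icc i j, (if k ∈ x then (1:ℤ) else -1) := by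
  rw [cfun, ← Finset.sum_filter_add_sum_filter_not (Icc i j) (· ∈ x)]
  rw [Finset.filter_mem_eq_inter]
  have h2 : (Icc i j).filter (fun k => ¬ k ∈ x) = Icc i j \ x := by
    rw [Finset.sdiff_eq_filter]
  rw [h2]
  have e1 : ∑ k ∈ Icc i j ∩ x, (if k ∈ x then (1:ℤ) else -1) = ((Icc i j ∩ x).card : ℤ) := by
    rw [Finset.sum_congr rfl (fun k hk => if_pos (Finset.mem_inter.1 hk).2)]
    simp
  have e2 : ∑ k ∈ Icc i j \ x, (if k ∈ x then (1:ℤ) else -1) = -((Icc i j \ x).card : ℤ) := by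
    rw [Finset.sum_congr rfl (fun k hk => if_neg (Finset.mem_sdiff.1 hk).2)]
    simp
  rw [e1, e2]
  ring

lemma Gf_zero (x : Finset ℕ) : Gf x 0 = 0 := by simp [Gf, cfun]

lemma Gf_succ (x : Finset ℕ) (k : ℕ) :
    Gf x (k+1) = Gf x k + (if k+1 ∈ x then (1:ℤ) else -1) := by
  rw [Gf, Gf, cfun_eq_sum, cfun_eq_sum, Finset.sum_Icc_succ_top (by omega)]

lemma cfun_sub (x : Finset ℕ) {a b : ℕ} (h : a ≤ b) :
    cfun x (a+1) b = Gf x b - Gf x a := by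
  have e : ∀ c d : ℕ, Icc (c+1) d = Ioc c d := by intro c d; ext k; simp
  rw [Gf, Gf, cfun_eq_sum, cfun_eq_sum, cfun_eq_sum, e a b]
  rw [show (1:ℕ) = 0 + 1 from rfl, e 0 b, e 0 a]
  rw [← Finset.sum_Ioc_consecutive _ (Nat.zero_le a) h]
  ring

lemma Gf_mem {x : Finset ℕ} {k : ℕ} (h : k + 1 ∈ x) : Gf x (k+1) = Gf x k + 1 := by
  rw [Gf_succ, if_pos h]

lemma Gf_not_mem {x : Finset ℕ} {k : ℕ} (h : k + 1 ∉ x) : Gf x (k+1) = Gf x k - 1 := by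
  rw [Gf_succ, if_neg h]; ring

lemma Gf_step_le (x : Finset ℕ) (k : ℕ) : Gf x (k+1) ≤ Gf x k + 1 := by
  rw [Gf_succ]; split <;> omega

lemma Gf_step_ge (x : Finset ℕ) (k : ℕ) : Gf x k - 1 ≤ Gf x (k+1) := by
  rw [Gf_succ]; split <;> omega

lemma mem_of_Gf_lt {x : Finset ℕ} {k : ℕ} (h : Gf x k < Gf x (k+1)) : k + 1 ∈ x := by
  by_contra hc; rw [Gf_not_mem hc] at h; omega

lemma not_mem_of_Gf_gt {x : Finset ℕ} {k : ℕ} (h : Gf x (k+1) < Gf x k) : k + 1 ∉ x := by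
  intro hc; rw [Gf_mem hc] at h; omega

/-- IVT going up. -/
lemma ivt_le (x : Finset ℕ) {a b : ℕ} {v : ℤ} (hab : a ≤ b) (h1 : Gf x a ≤ v)
    (h2 : v ≤ Gf x b) : ∃ k, a ≤ k ∧ k ≤ b ∧ Gf x k = v := by
  induction b with
  | zero =>
    have ha : a = 0 := by omega
    subst ha
    exact ⟨0, le_refl _, le_refl _, le_antisymm h1 h2⟩
  | succ b ih =>
    rcases Nat.lt_or_ge a (b+1) with hb | hb
    · rcases le_or_gt v (Gf x b) with hv | hv
      · obtain ⟨k, h3, h4, h5⟩ := ih (by omega) hv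
        exact ⟨k, h3, by omega, h5⟩
      · have := Gf_step_le x b
        exact ⟨b+1, by omega, le_refl _, by omega⟩
    · have ha : a = b + 1 := by omega
      exact ⟨b+1, ha.le, le_refl _, le_antisymm (ha ▸ h1) h2⟩

/-- IVT going down. -/
lemma ivt_ge (x : Finset ℕ) {a b : ℕ} {v : ℤ} (hab : a ≤ b) (h1 : v ≤ Gf x a)
    (h2 : Gf x b ≤ v) : ∃ k, a ≤ k ∧ k ≤ b ∧ Gf x k = v := by
  induction b with
  | zero =>
    have ha : a = 0 := by omega
    subst ha
    exact ⟨0, le_refl _, le_refl _, le_antisymm h2 h1⟩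
  | succ b ih =>
    rcases Nat.lt_or_ge a (b+1) with hb | hb
    · rcases le_or_gt (Gf x b) v with hv | hv
      · obtain ⟨k, h3, h4, h5⟩ := ih (by omega) hv
        exact ⟨k, h3, by omega, h5⟩
      · have := Gf_step_ge x b
        exact ⟨b+1, by omega, le_refl _, by omega⟩
    · have ha : a = b + 1 := by omega
      exact ⟨b+1, ha.le, le_refl _, le_antisymm h2 (ha ▸ h1)⟩

lemma cfun_eq {x : Finset ℕ} {i j : ℕ} (hi : 1 ≤ i) (hj : i - 1 ≤ j) :
    cfun x i j = Gf x j - Gf x (i-1) := by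
  have h := cfun_sub x (a := i-1) (b := j) hj
  rw [show i - 1 + 1 = i from by omega] at h
  exact h

/-- condE : the "unmatched `(`" condition -/
def condE (n : ℕ) (x : Finset ℕ) (i : ℕ) : Prop := ∀ j, i ≤ j → j ≤ n → Gf x (i-1) < Gf x j

/-- condR : the "unmatched `)`" condition (new record minimum) -/
def condR (x : Finset ℕ) (i : ℕ) : Prop := ∀ k, k < i → Gf x i < Gf x k

lemma condE_mem {n : ℕ} {x : Finset ℕ} {i : ℕ} (hi : 1 ≤ i) (hin : i ≤ n)
    (h : condE n x i) : i ∈ x := by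
  have h1 := h i (le_refl _) hin
  have : i - 1 + 1 = i := by omega
  exact this ▸ mem_of_Gf_lt (by rw [this]; exact h1)

lemma condR_not_mem {x : Finset ℕ} {i : ℕ} (hi : 1 ≤ i) (h : condR x i) : i ∉ x := by
  have h1 := h (i-1) (by omega)
  have e : i - 1 + 1 = i := by omega
  exact e ▸ not_mem_of_Gf_gt (by rw [e]; exact h1)

lemma sgv_one_or_two {n : ℕ} {x : Finset ℕ} {i : ℕ} (h : i ∈ x) :
    sgv n x i = 1 ∨ sgv n x i = 2 := by
  rw [sgv, if_pos h]; split <;> simp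

lemma sgv_zero_or_two {n : ℕ} {x : Finset ℕ} {i : ℕ} (h : i ∉ x) :
    sgv n x i = 0 ∨ sgv n x i = 2 := by
  rw [sgv, if_neg h]; split <;> simp

lemma sgv_mem_of_one {n : ℕ} {x : Finset ℕ} {i : ℕ} (h : sgv n x i = 1) : i ∈ x := by
  by_contra hc
  rcases sgv_zero_or_two (n := n) hc with h' | h' <;> omega

/-- characterization of `*` for elements -/
lemma charE {n : ℕ} {x : Finset ℕ} {i : ℕ} (hi : 1 ≤ i) (hin : i ≤ n) (hm : i ∈ x) :
    sgv n x i = 2 ↔ condE n x i := by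
  rw [sgv, if_pos hm]
  have hstep : Gf x i = Gf x (i-1) + 1 := by
    have e : i - 1 + 1 = i := by omega
    rw [← e] at hm ⊢; exact Gf_mem hm
  constructor
  · intro h j hj1 hj2
    have hne : ¬ ∃ j ∈ Finset.Ioc i n, cfun x i j = 0 := by
      by_contra hc; rw [if_pos hc] at h; omega
    push_neg at hne
    by_contra hle
    push_neg at hle
    rcases Nat.eq_or_lt_of_le hj1 with he | hlt
    · rw [← he] at hle; omega
    · obtain ⟨k, hk1, hk2, hk3⟩ := ivt_ge x (le_of_lt hlt) (by omega) hle
      have hki : i < k := by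
        rcases Nat.eq_or_lt_of_le hk1 with h' | h'
        · exfalso; rw [← h'] at hk3; omega
        · exact h'
      exact hne k (Finset.mem_Ioc.2 ⟨hki, by omega⟩)
        (by rw [cfun_eq hi (by omega), hk3]; ring)
  · intro h
    rw [if_neg]
    push_neg
    intro j hj
    rw [Finset.mem_Ioc] at hj
    rw [cfun_eq hi (by omega)]
    have := h j (by omega) hj.2
    omega

/-- characterization of `*` for non-elements -/
lemma charR {n : ℕ} {x : Finset ℕ} {i : ℕ} (hi : 1 ≤ i) (hm : i ∉ x) :
    sgv n x i = 2 ↔ condR x i := by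
  rw [sgv, if_neg hm]
  have hstep : Gf x i = Gf x (i-1) - 1 := by
    have e : i - 1 + 1 = i := by omega
    rw [← e] at hm ⊢; exact Gf_not_mem hm
  constructor
  · intro h k hk
    have hne : ¬ ∃ j ∈ Finset.Ico 1 i, cfun x j i = 0 := by
      by_contra hc; rw [if_pos hc] at h; omega
    push_neg at hne
    by_contra hle
    push_neg at hle
    rcases Nat.eq_or_lt_of_le (show k ≤ i - 1 by omega) with he | hlt
    · rw [he] at hle; omega
    · obtain ⟨k', hk1, hk2, hk3⟩ := ivt_le x (le_of_lt hlt) hle (by omega)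
      have hki : k' < i - 1 := by
        rcases Nat.eq_or_lt_of_le hk2 with h' | h'
        · exfalso; rw [h'] at hk3; omega
        · exact h'
      refine hne (k'+1) (Finset.mem_Ico.2 ⟨by omega, by omega⟩) ?_
      rw [cfun_eq (by omega) (by omega)]
      simp [hk3]
  · intro h
    rw [if_neg]
    push_neg
    intro j hj
    rw [Finset.mem_Ico] at hj
    rw [cfun_eq hj.1 (by omega)]
    have := h (j-1) (by omega)
    omega

lemma Gf_insert {z : Finset ℕ} {q : ℕ} (hqz : q ∉ z) (hq1 : 1 ≤ q) (k : ℕ) :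
    Gf (insert q z) k = Gf z k + (if q ≤ k then 2 else 0) := by
  induction k with
  | zero => rw [Gf_zero, Gf_zero, if_neg (by omega)]; ring
  | succ k ih =>
    rw [Gf_succ, Gf_succ, ih]
    by_cases h : k + 1 = q
    · subst h
      rw [if_pos (Finset.mem_insert_self _ _), if_neg hqz, if_pos (le_refl _), if_neg (by omega)]
      ring
    · have hmem : k + 1 ∈ insert q z ↔ k + 1 ∈ z := by
        simp [Finset.mem_insert, h]
      by_cases h2 : k + 1 ∈ z
      · rw [if_pos h2, if_pos (hmem.2 h2)]
        by_cases h3 : q ≤ k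
        · rw [if_pos h3, if_pos (by omega)]; ring
        · rw [if_neg h3, if_neg (by omega)]; ring
      · rw [if_neg h2, if_neg (fun hc => h2 (hmem.1 hc))]
        by_cases h3 : q ≤ k
        · rw [if_pos h3, if_pos (by omega)]; ring
        · rw [if_neg h3, if_neg (by omega)]; ring

lemma starA {n : ℕ} {z : Finset ℕ} {i j : ℕ} (hi1 : 1 ≤ i) (hij : i < j) (hjn : j ≤ n)
    (hiz : i ∈ z) (hjz : j ∉ z) (hsi : sgv n z i = 2) (hsj : sgv n z j = 2) : False := by
  have hE := (charE hi1 (by omega) hiz).1 hsi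
  have hR := (charR (by omega) hjz).1 hsj
  have h1 := hE j (le_of_lt hij) hjn
  have h2 := hR (i-1) (by omega)
  omega

lemma flipUp {n : ℕ} {z : Finset ℕ} {q : ℕ} (hq1 : 1 ≤ q) (hqn : q ≤ n)
    (hqz : q ∉ z) (hrec : ∀ k, k < q → Gf z q < Gf z k)
    (hmax : ∀ p, q < p → p ≤ n → ∃ k, k < p ∧ Gf z k ≤ Gf z p) :
    ∀ i, 1 ≤ i → i ≤ n → sgv n (insert q z) i = sgv n z i := by
  set w := insert q z with hw
  have hGlt : ∀ k, k < q → Gf w k = Gf z k := by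
    intro k hk; rw [Gf_insert hqz hq1, if_neg (by omega)]; ring
  have hGge : ∀ k, q ≤ k → Gf w k = Gf z k + 2 := by
    intro k hk; rw [Gf_insert hqz hq1, if_pos hk]
  have f1 : ∀ k, k ≤ n → Gf z q ≤ Gf z k := by
    intro k
    induction k using Nat.strong_induction_on with
    | _ k ih =>
      intro hk
      rcases lt_trichotomy k q with h|h|h
      · exact le_of_lt (hrec k h)
      · rw [h]
      · by_contra hc
        push_neg at hc
        obtain ⟨k', hk', hle⟩ := hmax k h hk
        exact absurd (ih k' hk' (by omega)) (by omega)
  have f2 : Gf z (q-1) = Gf z q + 1 := by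
    have e : q - 1 + 1 = q := by omega
    have := Gf_not_mem (k := q - 1) (e ▸ hqz)
    rw [e] at this; omega
  intro i hi1 hin
  by_cases hiq : i = q
  · subst hiq
    have s1 : sgv n z i = 2 := (charR hq1 hqz).2 hrec
    have s2 : sgv n w i = 2 := by
      refine (charE hq1 hqn (Finset.mem_insert_self _ _)).2 (fun j hj1 hj2 => ?_)
      rw [hGlt (i-1) (by omega), hGge j hj1, f2]
      have := f1 j hj2
      omega
    rw [s1, s2]
  · by_cases him : i ∈ z
    · have hiw : i ∈ w := Finset.mem_insert_of_mem him
      rcases Nat.lt_or_ge i q with hlt | hge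
      · have hz2 : ¬ condE n z i := by
          intro h
          have h1 := h q (by omega) hqn
          have h2 := f1 (i-1) (by omega)
          omega
        have hw2 : ¬ condE n w i := by
          intro h
          have h1 := h (q-1) (by omega) (by omega)
          rw [hGlt (i-1) (by omega), hGlt (q-1) (by omega), f2] at h1
          have h2 := hrec (i-1) (by omega)
          omega
        rcases sgv_one_or_two (n := n) him with h | h
        · rcases sgv_one_or_two (n := n) hiw with h' | h'
          · rw [h, h']
          · exact absurd ((charE hi1 hin hiw).1 h') hw2
        · exact absurd ((charE hi1 hin him).1 h) hz2
      · have hq_lt : q < i := by omega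
        have hiff : condE n w i ↔ condE n z i := by
          constructor
          · intro h j hj1 hj2
            have := h j hj1 hj2
            rw [hGge (i-1) (by omega), hGge j (by omega)] at this
            omega
          · intro h j hj1 hj2
            have := h j hj1 hj2
            rw [hGge (i-1) (by omega), hGge j (by omega)]
            omega
        rcases sgv_one_or_two (n := n) him with h | h
        · rcases sgv_one_or_two (n := n) hiw with h' | h'
          · rw [h, h']
          · exfalso
            have := hiff.1 ((charE hi1 hin hiw).1 h')
            have h2 := (charE hi1 hin him).2 this
            omega
        · rw [h, (charE hi1 hin hiw).2 (hiff.2 ((charE hi1 hin him).1 h))]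
    · have hiw : i ∉ w := by
        rw [hw, Finset.mem_insert]; push_neg; exact ⟨hiq, him⟩
      rcases Nat.lt_or_ge i q with hlt | hge
      · have hiff : condR w i ↔ condR z i := by
          constructor
          · intro h k hk
            have := h k hk
            rw [hGlt i hlt, hGlt k (by omega)] at this
            omega
          · intro h k hk
            have := h k hk
            rw [hGlt i hlt, hGlt k (by omega)]
            omega
        rcases sgv_zero_or_two (n := n) him with h | h
        · rcases sgv_zero_or_two (n := n) hiw with h' | h'
          · rw [h, h']
          · exfalso
            have := hiff.1 ((charR hi1 hiw).1 h')
            have h2 := (charR (n := n) hi1 him).2 this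
            omega
        · rw [h, (charR hi1 hiw).2 (hiff.2 ((charR hi1 him).1 h))]
      · have hq_lt : q < i := by omega
        have hz2 : ¬ condR z i := by
          intro h
          obtain ⟨k, hk, hle⟩ := hmax i hq_lt hin
          exact absurd (h k hk) (by omega)
        have hw2 : ¬ condR w i := by
          intro h
          have h1 := h q hq_lt
          rw [hGge i (by omega), hGge q (le_refl _)] at h1
          have := f1 i hin
          omega
        rcases sgv_zero_or_two (n := n) him with h | h
        · rcases sgv_zero_or_two (n := n) hiw with h' | h'
          · rw [h, h']
          · exact absurd ((charR hi1 hiw).1 h') hw2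
        · exact absurd ((charR hi1 him).1 h) hz2

lemma flipDown {n : ℕ} {z : Finset ℕ} {q : ℕ} (hq1 : 1 ≤ q) (hqn : q ≤ n) (hqz : q ∈ z)
    (hstar : ∀ j, q ≤ j → j ≤ n → Gf z (q-1) < Gf z j)
    (hmin : ∀ p, 1 ≤ p → p < q → ∃ j, p ≤ j ∧ j ≤ n ∧ Gf z j ≤ Gf z (p-1)) :
    ∀ i, 1 ≤ i → i ≤ n → sgv n (z.erase q) i = sgv n z i := by
  set z' := z.erase q with hz'
  have hins : insert q z' = z := Finset.insert_erase hqz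
  have hqz' : q ∉ z' := Finset.notMem_erase _ _
  have hG : ∀ k, Gf z k = Gf z' k + (if q ≤ k then 2 else 0) := by
    intro k
    rw [← Gf_insert hqz' hq1 k, hins]
  have g0 : Gf z q = Gf z (q-1) + 1 := by
    have e : q - 1 + 1 = q := by omega
    have := Gf_mem (k := q-1) (e ▸ hqz)
    rw [e] at this; omega
  have g1 : ∀ k, k < q → Gf z (q-1) ≤ Gf z k := by
    by_contra hc
    push_neg at hc
    obtain ⟨k0, hk0q, hk0⟩ := hc
    have hne : ((Finset.range q).filter (fun k => Gf z k < Gf z (q-1))).Nonempty :=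
      ⟨k0, Finset.mem_filter.2 ⟨Finset.mem_range.2 hk0q, hk0⟩⟩
    obtain ⟨ks, hksmem, hksmax⟩ : ∃ ks ∈ (Finset.range q).filter (fun k => Gf z k < Gf z (q-1)),
        ∀ j ∈ (Finset.range q).filter (fun k => Gf z k < Gf z (q-1)), j ≤ ks :=
      ⟨_, Finset.max'_mem _ hne, fun j hj => Finset.le_max' _ j hj⟩
    rw [Finset.mem_filter, Finset.mem_range] at hksmem
    obtain ⟨hks1, hks2⟩ := hksmem
    have hksq : ks < q - 1 := by
      rcases Nat.lt_or_ge ks (q-1) with h | h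
      · exact h
      · exfalso
        have e : ks = q - 1 := by omega
        rw [e] at hks2
        omega
    have c1 : ∀ j, ks < j → j ≤ q - 1 → Gf z (q-1) ≤ Gf z j := by
      intro j hj1 hj2
      by_contra hcc
      push_neg at hcc
      have hjA : j ∈ (Finset.range q).filter (fun k => Gf z k < Gf z (q-1)) :=
        Finset.mem_filter.2 ⟨Finset.mem_range.2 (show j < q by omega), hcc⟩
      exact absurd (hksmax j hjA) (by omega)
    have hstep1 := Gf_step_le z ks
    have hstep2 := c1 (ks+1) (by omega) (by omega)
    have hmem : ks + 1 ∈ z := mem_of_Gf_lt (by omega)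
    obtain ⟨j, hj1, hj2, hj3⟩ := hmin (ks+1) (by omega) (by omega)
    rw [show ks + 1 - 1 = ks from by omega] at hj3
    rcases Nat.lt_or_ge j q with h | h
    · exact absurd (c1 j (by omega) (by omega)) (by omega)
    · exact absurd (hstar j h hj2) (by omega)
  have main := flipUp (n := n) (z := z') (q := q) hq1 hqn hqz'
    (by
      intro k hk
      have e1 : Gf z' q = Gf z q - 2 := by have := hG q; rw [if_pos (le_refl _)] at this; omega
      have e2 : Gf z' k = Gf z k := by have := hG k; rw [if_neg (by omega)] at this; omega
      have := g1 k hk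
      omega)
    (by
      intro p hp1 hp2
      refine ⟨q, hp1, ?_⟩
      have e1 : Gf z' q = Gf z q - 2 := by have := hG q; rw [if_pos (le_refl _)] at this; omega
      have e2 : Gf z' p = Gf z p - 2 := by have := hG p; rw [if_pos (by omega)] at this; omega
      have := hstar p (by omega) hp2
      omega)
  intro i h1 h2
  have := main i h1 h2
  rw [hins] at this
  exact this.symm

noncomputable def ones (n : ℕ) (x : Finset ℕ) : Finset ℕ := (Icc 1 n).filter (fun i => sgv n x i = 1)

noncomputable def stars (n : ℕ) (x : Finset ℕ) : Finset ℕ := (Icc 1 n).filter (fun i => sgv n x i = 2)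

def upset (S s : Finset ℕ) : Prop := ∀ a ∈ s, ∀ b ∈ S, a ≤ b → b ∈ s

lemma ones_subset (n x) : ones n x ⊆ Icc 1 n := Finset.filter_subset _ _
lemma stars_subset (n x) : stars n x ⊆ Icc 1 n := Finset.filter_subset _ _

lemma disj_ones_stars (n x) : Disjoint (ones n x) (stars n x) := by
  rw [Finset.disjoint_left]
  intro i h1 h2
  rw [ones, Finset.mem_filter] at h1
  rw [stars, Finset.mem_filter] at h2
  omega

lemma ones_sub_mem {n : ℕ} {x : Finset ℕ} : ones n x ⊆ x := by
  intro i hi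
  rw [ones, Finset.mem_filter] at hi
  exact sgv_mem_of_one hi.2

lemma mem_decomp {n : ℕ} {x : Finset ℕ} (hx : x ⊆ Icc 1 n) :
    x = ones n x ∪ (stars n x ∩ x) := by
  ext i
  constructor
  · intro hi
    have hIcc := hx hi
    rcases sgv_one_or_two (n := n) hi with h | h
    · exact Finset.mem_union_left _ (Finset.mem_filter.2 ⟨hIcc, h⟩)
    · exact Finset.mem_union_right _ (Finset.mem_inter.2 ⟨Finset.mem_filter.2 ⟨hIcc, h⟩, hi⟩)
  · intro hi
    rcases Finset.mem_union.1 hi with h | h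
    · exact ones_sub_mem h
    · exact (Finset.mem_inter.1 h).2

lemma upset_stars_inter {n : ℕ} {x : Finset ℕ} (hx : x ⊆ Icc 1 n) :
    upset (stars n x) (stars n x ∩ x) := by
  intro a ha b hb hab
  rw [Finset.mem_inter] at ha
  obtain ⟨haS, hax⟩ := ha
  refine Finset.mem_inter.2 ⟨hb, ?_⟩
  by_contra hbx
  rcases Nat.eq_or_lt_of_le hab with he | hlt
  · exact hbx (he ▸ hax)
  · rw [stars, Finset.mem_filter, Finset.mem_Icc] at haS hb
    exact starA haS.1.1 hlt hb.1.2 hax hbx haS.2 hb.2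

lemma upset_comparable {S s t : Finset ℕ} (hs : s ⊆ S) (ht : t ⊆ S)
    (hus : upset S s) (hut : upset S t) : s ⊆ t ∨ t ⊆ s := by
  by_contra h
  push_neg at h
  obtain ⟨h1, h2⟩ := h
  obtain ⟨a, ha, hat⟩ := Finset.not_subset.1 h1
  obtain ⟨b, hb, hbs⟩ := Finset.not_subset.1 h2
  rcases le_total a b with hab | hab
  · exact hbs (hus a ha b (ht hb) hab)
  · exact hat (hut b hb a (hs ha) hab)

lemma sg_filters_eq {n : ℕ} {y x : Finset ℕ} (h : ∀ i ∈ Icc 1 n, sgv n y i = sgv n x i) :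
    ones n y = ones n x ∧ stars n y = stars n x := by
  constructor <;>
  · apply Finset.filter_congr
    intro i hi
    rw [h i hi]

lemma reachUp {n : ℕ} {x : Finset ℕ} (hx : x ⊆ Icc 1 n) :
    ∀ (d : ℕ) (s : Finset ℕ), s ⊆ stars n x → upset (stars n x) s →
      stars n x ∩ x ⊆ s → (s \ (stars n x ∩ x)).card = d →
      ∀ i ∈ Icc 1 n, sgv n (ones n x ∪ s) i = sgv n x i := by
  intro d
  induction d with
  | zero =>
    intro s hsS hsup h1 hcard
    have : s = stars n x ∩ x := by
      apply Finset.Subset.antisymm _ h1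
      intro a ha
      by_contra hc
      have : a ∈ s \ (stars n x ∩ x) := Finset.mem_sdiff.2 ⟨ha, hc⟩
      rw [Finset.card_eq_zero] at hcard
      rw [hcard] at this
      exact absurd this (Finset.notMem_empty a)
    rw [this, ← mem_decomp hx]
    intro i _
    rfl
  | succ d ih =>
    intro s hsS hsup h1 hcard
    have hne : (s \ (stars n x ∩ x)).Nonempty := by
      rw [← Finset.card_pos, hcard]; omega
    set q := (s \ (stars n x ∩ x)).min' hne with hq
    have hqmem : q ∈ s \ (stars n x ∩ x) := Finset.min'_mem _ hne
    rw [Finset.mem_sdiff] at hqmem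
    obtain ⟨hqs, hqns⟩ := hqmem
    have hqS : q ∈ stars n x := hsS hqs
    have hqx : q ∉ x := fun hc => hqns (Finset.mem_inter.2 ⟨hqS, hc⟩)
    have hqIcc : 1 ≤ q ∧ q ≤ n := by
      have := (Finset.mem_filter.1 hqS).1
      rw [Finset.mem_Icc] at this
      exact this
    have hsgq : sgv n x q = 2 := (Finset.mem_filter.1 hqS).2
    set s' := s.erase q with hs'
    have hs'S : s' ⊆ stars n x := fun a ha => hsS (Finset.erase_subset _ _ ha)
    have hs'up : upset (stars n x) s' := by
      intro a ha b hb hab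
      have has : a ∈ s := Finset.erase_subset _ _ ha
      have hbs : b ∈ s := hsup a has b hb hab
      refine Finset.mem_erase.2 ⟨?_, hbs⟩
      intro hbq
      subst hbq
      rcases Finset.mem_erase.1 ha with ⟨haq, _⟩
      by_cases hax : a ∈ stars n x ∩ x
      · exact hqns (upset_stars_inter hx a hax q hqS hab)
      · have : a ∈ s \ (stars n x ∩ x) := Finset.mem_sdiff.2 ⟨has, hax⟩
        exact haq (le_antisymm hab (Finset.min'_le _ a this))
    have h1' : stars n x ∩ x ⊆ s' := by
      intro a ha
      exact Finset.mem_erase.2 ⟨fun hc => hqns (hc ▸ ha), h1 ha⟩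
    have hcard' : (s' \ (stars n x ∩ x)).card = d := by
      have : s' \ (stars n x ∩ x) = (s \ (stars n x ∩ x)).erase q := by
        ext a
        simp only [hs', Finset.mem_sdiff, Finset.mem_erase]
        tauto
      rw [this, Finset.card_erase_of_mem (Finset.mem_sdiff.2 ⟨hqs, hqns⟩), hcard]
      omega
    have ihz := ih s' hs'S hs'up h1' hcard'
    set z := ones n x ∪ s' with hz
    have hqz : q ∉ z := by
      rw [hz, Finset.mem_union]
      push_neg
      refine ⟨?_, Finset.notMem_erase _ _⟩
      intro hc
      have := (Finset.mem_filter.1 hc).2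
      omega
    have hsgzq : sgv n z q = 2 := by
      rw [ihz q (Finset.mem_Icc.2 ⟨hqIcc.1, hqIcc.2⟩)]
      exact hsgq
    have hrec : ∀ k, k < q → Gf z q < Gf z k := (charR hqIcc.1 hqz).1 hsgzq
    have hmax : ∀ p, q < p → p ≤ n → ∃ k, k < p ∧ Gf z k ≤ Gf z p := by
      intro p hp1 hp2
      by_contra hcon
      push_neg at hcon
      have hp0 : 1 ≤ p := by omega
      have hpz : p ∉ z := condR_not_mem hp0 hcon
      have hsgzp : sgv n z p = 2 := (charR hp0 hpz).2 hcon
      have hsgxp : sgv n x p = 2 := by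
        rw [← ihz p (Finset.mem_Icc.2 ⟨hp0, hp2⟩)]
        exact hsgzp
      have hpS : p ∈ stars n x := Finset.mem_filter.2 ⟨Finset.mem_Icc.2 ⟨hp0, hp2⟩, hsgxp⟩
      have hps' : p ∉ s' := fun hc => hpz (Finset.mem_union_right _ hc)
      by_cases hps : p ∈ s
      · have : p = q := by
          by_contra hc
          exact hps' (Finset.mem_erase.2 ⟨hc, hps⟩)
        omega
      · exact hps (hsup q hqs p hpS (by omega))
    have hflip := flipUp hqIcc.1 hqIcc.2 hqz hrec hmax
    have hzins : insert q z = ones n x ∪ s := by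
      rw [hz, ← Finset.union_insert, hs', Finset.insert_erase hqs]
    intro i hi
    rw [Finset.mem_Icc] at hi
    rw [← hzins, hflip i hi.1 hi.2]
    exact ihz i (Finset.mem_Icc.2 hi)

lemma reachDown {n : ℕ} {x : Finset ℕ} (hx : x ⊆ Icc 1 n) :
    ∀ (d : ℕ) (s : Finset ℕ), s ⊆ stars n x → upset (stars n x) s →
      s ⊆ stars n x ∩ x → ((stars n x ∩ x) \ s).card = d →
      ∀ i ∈ Icc 1 n, sgv n (ones n x ∪ s) i = sgv n x i := by
  intro d
  induction d with
  | zero =>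
    intro s hsS hsup h1 hcard
    have : s = stars n x ∩ x := by
      apply Finset.Subset.antisymm h1
      intro a ha
      by_contra hc
      have : a ∈ (stars n x ∩ x) \ s := Finset.mem_sdiff.2 ⟨ha, hc⟩
      rw [Finset.card_eq_zero] at hcard
      rw [hcard] at this
      exact absurd this (Finset.notMem_empty a)
    rw [this, ← mem_decomp hx]
    intro i _
    rfl
  | succ d ih =>
    intro s hsS hsup h1 hcard
    have hne : ((stars n x ∩ x) \ s).Nonempty := by
      rw [← Finset.card_pos, hcard]; omega
    set q := ((stars n x ∩ x) \ s).max' hne with hq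
    have hqmem : q ∈ (stars n x ∩ x) \ s := Finset.max'_mem _ hne
    rw [Finset.mem_sdiff] at hqmem
    obtain ⟨hq1mem, hqns⟩ := hqmem
    have hqS : q ∈ stars n x := (Finset.mem_inter.1 hq1mem).1
    have hqIcc : 1 ≤ q ∧ q ≤ n := by
      have := (Finset.mem_filter.1 hqS).1
      rw [Finset.mem_Icc] at this
      exact this
    have hsgq : sgv n x q = 2 := (Finset.mem_filter.1 hqS).2
    set s' := insert q s with hs'
    have hs'S : s' ⊆ stars n x := by
      intro a ha
      rcases Finset.mem_insert.1 ha with h | h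
      · exact h ▸ hqS
      · exact hsS h
    have hs'up : upset (stars n x) s' := by
      intro a ha b hb hab
      rcases Finset.mem_insert.1 ha with h | h
      · subst h
        have hbs1 : b ∈ stars n x ∩ x := upset_stars_inter hx q hq1mem b hb hab
        by_cases hbs : b ∈ s
        · exact Finset.mem_insert_of_mem hbs
        · have : b ∈ (stars n x ∩ x) \ s := Finset.mem_sdiff.2 ⟨hbs1, hbs⟩
          have := Finset.le_max' _ b this
          have hba : b = q := by omega
          exact hba ▸ Finset.mem_insert_self _ _
      · exact Finset.mem_insert_of_mem (hsup a h b hb hab)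
    have h1' : s' ⊆ stars n x ∩ x := by
      intro a ha
      rcases Finset.mem_insert.1 ha with h | h
      · exact h ▸ hq1mem
      · exact h1 h
    have hcard' : ((stars n x ∩ x) \ s').card = d := by
      have : (stars n x ∩ x) \ s' = ((stars n x ∩ x) \ s).erase q := by
        ext a
        simp only [hs', Finset.mem_sdiff, Finset.mem_erase, Finset.mem_insert]
        tauto
      rw [this, Finset.card_erase_of_mem (Finset.mem_sdiff.2 ⟨hq1mem, hqns⟩), hcard]
      omega
    have ihz := ih s' hs'S hs'up h1' hcard'
    set z := ones n x ∪ s' with hz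
    have hqz : q ∈ z := Finset.mem_union_right _ (Finset.mem_insert_self _ _)
    have hsgzq : sgv n z q = 2 := by
      rw [ihz q (Finset.mem_Icc.2 ⟨hqIcc.1, hqIcc.2⟩)]
      exact hsgq
    have hstar : ∀ j, q ≤ j → j ≤ n → Gf z (q-1) < Gf z j :=
      (charE hqIcc.1 hqIcc.2 hqz).1 hsgzq
    have hmin : ∀ p, 1 ≤ p → p < q → ∃ j, p ≤ j ∧ j ≤ n ∧ Gf z j ≤ Gf z (p-1) := by
      intro p hp1 hp2
      by_contra hcon
      push_neg at hcon
      have hcon' : condE n z p := by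
        intro j hj1 hj2
        exact hcon j hj1 hj2
      have hpn : p ≤ n := by omega
      have hpz : p ∈ z := condE_mem hp1 hpn hcon'
      have hsgzp : sgv n z p = 2 := (charE hp1 hpn hpz).2 hcon'
      have hsgxp : sgv n x p = 2 := by
        rw [← ihz p (Finset.mem_Icc.2 ⟨hp1, hpn⟩)]
        exact hsgzp
      have hpo : p ∉ ones n x := by
        intro hc
        have := (Finset.mem_filter.1 hc).2
        omega
      have hps' : p ∈ s' := by
        rcases Finset.mem_union.1 hpz with h | h
        · exact absurd h hpo
        · exact h
      rcases Finset.mem_insert.1 hps' with h | h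
      · omega
      · have := hsup p h q hqS (by omega)
        exact hqns this
    have hflip := flipDown hqIcc.1 hqIcc.2 hqz hstar hmin
    have hzer : z.erase q = ones n x ∪ s := by
      rw [hz, Finset.erase_union_distrib, hs', Finset.erase_insert hqns,
        Finset.erase_eq_of_notMem]
      intro hc
      have := (Finset.mem_filter.1 hc).2
      omega
    intro i hi
    rw [Finset.mem_Icc] at hi
    rw [← hzer, hflip i hi.1 hi.2]
    exact ihz i (Finset.mem_Icc.2 hi)

lemma classUnion {n : ℕ} {x : Finset ℕ} (hx : x ⊆ Icc 1 n) {s : Finset ℕ}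
    (hs : s ⊆ stars n x) (hup : upset (stars n x) s) :
    ∀ i ∈ Icc 1 n, sgv n (ones n x ∪ s) i = sgv n x i := by
  rcases upset_comparable hs (Finset.inter_subset_left) hup (upset_stars_inter hx) with h | h
  · exact reachDown hx _ s hs hup h rfl
  · exact reachUp hx _ s hs hup h rfl

def Mlo (x : Finset ℕ) : ℕ → ℤ
  | 0 => 0
  | (k+1) => min (Mlo x k) (Gf x (k+1))

def Mhi (x : Finset ℕ) (n : ℕ) : ℕ → ℤ
  | 0 => Gf x n
  | (d+1) => min (Gf x (n - (d+1))) (Mhi x n d)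

lemma Mlo_le {x : Finset ℕ} : ∀ {k j : ℕ}, j ≤ k → Mlo x k ≤ Gf x j := by
  intro k
  induction k with
  | zero =>
    intro j hj
    have : j = 0 := by omega
    subst this
    rw [Gf_zero, Mlo]
  | succ k ih =>
    intro j hj
    rcases Nat.lt_or_ge j (k+1) with h | h
    · exact le_trans (min_le_left _ _) (ih (by omega))
    · have : j = k + 1 := by omega
      subst this
      exact min_le_right _ _

lemma Mlo_exists {x : Finset ℕ} : ∀ k : ℕ, ∃ j, j ≤ k ∧ Mlo x k = Gf x j := by
  intro k
  induction k with
  | zero => exact ⟨0, le_refl _, (Gf_zero x).symm⟩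
  | succ k ih =>
    obtain ⟨j, hj, he⟩ := ih
    rcases le_total (Mlo x k) (Gf x (k+1)) with h | h
    · exact ⟨j, by omega, by rw [Mlo, min_eq_left h, he]⟩
    · exact ⟨k+1, le_refl _, by rw [Mlo, min_eq_right h]⟩

lemma Mhi_le {x : Finset ℕ} {n : ℕ} : ∀ {d j : ℕ}, n - d ≤ j → j ≤ n → Mhi x n d ≤ Gf x j := by
  intro d
  induction d with
  | zero =>
    intro j h1 h2
    have : j = n := by omega
    subst this
    rw [Mhi]
  | succ d ih =>
    intro j h1 h2
    rcases le_or_gt (n - d) j with h | h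
    · exact le_trans (min_le_right _ _) (ih h h2)
    · have : j = n - (d+1) := by omega
      subst this
      exact min_le_left _ _

lemma Mhi_exists {x : Finset ℕ} {n : ℕ} : ∀ d : ℕ, ∃ j, n - d ≤ j ∧ j ≤ n ∧ Mhi x n d = Gf x j := by
  intro d
  induction d with
  | zero => exact ⟨n, by omega, le_refl _, rfl⟩
  | succ d ih =>
    obtain ⟨j, hj1, hj2, he⟩ := ih
    rcases le_total (Gf x (n - (d+1))) (Mhi x n d) with h | h
    · exact ⟨n - (d+1), le_refl _, by omega, by rw [Mhi, min_eq_left h]⟩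
    · exact ⟨j, by omega, hj2, by rw [Mhi, min_eq_right h, he]⟩

open Classical in
lemma lemR (x : Finset ℕ) : ∀ N : ℕ,
    (((Icc 1 N).filter (fun i => condR x i)).card : ℤ) = - Mlo x N := by
  intro N
  induction N with
  | zero => simp [Mlo]
  | succ N ih =>
    have hins : Icc 1 (N+1) = insert (N+1) (Icc 1 N) := by
      ext a; simp [Finset.mem_insert]; omega
    have hnm : (N+1) ∉ (Icc 1 N).filter (fun i => condR x i) := by
      intro hc
      have := (Finset.mem_filter.1 hc).1
      rw [Finset.mem_Icc] at this
      omega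
    rw [hins, Finset.filter_insert]
    by_cases hc : condR x (N+1)
    · rw [if_pos hc, Finset.card_insert_of_notMem hnm]
      have h1 : Gf x (N+1) < Mlo x N := by
        obtain ⟨j, hj, he⟩ := Mlo_exists (x := x) N
        rw [he]
        exact hc j (by omega)
      have h2 : Mlo x N ≤ Gf x N := Mlo_le (le_refl _)
      have h3 := Gf_step_ge x N
      have h4 : Mlo x (N+1) = Gf x (N+1) := by
        rw [Mlo, min_eq_right (by omega)]
      rw [h4]
      push_cast
      omega
    · rw [if_neg hc]
      have h1 : Mlo x N ≤ Gf x (N+1) := by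
        rw [condR] at hc
        push_neg at hc
        obtain ⟨k, hk, hle⟩ := hc
        exact le_trans (Mlo_le (by omega)) hle
      have h4 : Mlo x (N+1) = Mlo x N := by
        rw [Mlo, min_eq_left h1]
      rw [h4, ih]

open Classical in
lemma lemE {x : Finset ℕ} {n : ℕ} : ∀ d : ℕ, d ≤ n →
    (((Icc (n-d+1) n).filter (fun i => condE n x i)).card : ℤ) = Gf x n - Mhi x n d := by
  intro d
  induction d with
  | zero =>
    intro _
    rw [show n - 0 + 1 = n + 1 from by omega, Finset.Icc_eq_empty (by omega)]
    simp [Mhi]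
  | succ d ih =>
    intro hdn
    have hd := ih (by omega)
    have hlb : n - (d+1) + 1 = n - d := by omega
    have hins : Icc (n-(d+1)+1) n = insert (n-d) (Icc (n-d+1) n) := by
      ext a; simp [Finset.mem_insert]; omega
    have hnm : (n-d) ∉ (Icc (n-d+1) n).filter (fun i => condE n x i) := by
      intro hcm
      have := (Finset.mem_filter.1 hcm).1
      rw [Finset.mem_Icc] at this
      omega
    rw [hins, Finset.filter_insert]
    have hsub : n - d - 1 = n - (d+1) := by omega
    by_cases hc : condE n x (n-d)
    · rw [if_pos hc, Finset.card_insert_of_notMem hnm]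
      have h1 : Gf x (n-(d+1)) < Mhi x n d := by
        obtain ⟨j, hj1, hj2, he⟩ := Mhi_exists (x := x) (n := n) d
        rw [he]
        have := hc j hj1 hj2
        rw [hsub] at this
        exact this
      have h2 : Mhi x n d ≤ Gf x (n-d) := Mhi_le (le_refl _) (by omega)
      have h3 : Gf x (n-d) ≤ Gf x (n-(d+1)) + 1 := by
        have := Gf_step_le x (n-(d+1))
        rw [show n - (d+1) + 1 = n - d from by omega] at this
        exact this
      have h4 : Mhi x n (d+1) = Gf x (n-(d+1)) := by
        rw [Mhi, min_eq_left (by omega)]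
      rw [h4]
      push_cast
      omega
    · rw [if_neg hc]
      have h1 : Mhi x n d ≤ Gf x (n-(d+1)) := by
        rw [condE] at hc
        push_neg at hc
        obtain ⟨j, hj1, hj2, hle⟩ := hc
        rw [hsub] at hle
        exact le_trans (Mhi_le hj1 hj2) hle
      have h4 : Mhi x n (d+1) = Mhi x n d := by
        rw [Mhi, min_eq_right h1]
      rw [h4, hd]

open Classical in
lemma size_id {n : ℕ} {z : Finset ℕ} (hz : z ⊆ Icc 1 n) :
    2 * (ones n z).card + (stars n z).card = n := by
  have hE : (((Icc 1 n).filter (fun i => condE n z i)).card : ℤ) = Gf z n - Mhi z n n := by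
    have := lemE (x := z) (n := n) n (le_refl n)
    rw [show n - n + 1 = 1 from by omega] at this
    exact this
  have hR := lemR z n
  have hMM : Mhi z n n = Mlo z n := by
    apply le_antisymm
    · obtain ⟨j, hj, he⟩ := Mlo_exists (x := z) n
      rw [he]
      exact Mhi_le (by omega) hj
    · obtain ⟨j, hj1, hj2, he⟩ := Mhi_exists (x := z) (n := n) n
      rw [he]
      exact Mlo_le hj2
  -- ones as a filter on z
  have hOnes : ones n z = z.filter (fun i => ¬ condE n z i) := by
    ext i
    rw [ones, Finset.mem_filter, Finset.mem_filter]
    constructor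
    · intro ⟨hIcc, hs⟩
      have him : i ∈ z := sgv_mem_of_one hs
      rw [Finset.mem_Icc] at hIcc
      refine ⟨him, fun hcE => ?_⟩
      have := (charE hIcc.1 hIcc.2 him).2 hcE
      omega
    · intro ⟨him, hnE⟩
      have hIcc := hz him
      have hIcc' := Finset.mem_Icc.1 hIcc
      refine ⟨hIcc, ?_⟩
      rcases sgv_one_or_two (n := n) him with h | h
      · exact h
      · exact absurd ((charE hIcc'.1 hIcc'.2 him).1 h) hnE
  have hEz : (Icc 1 n).filter (fun i => condE n z i) = z.filter (fun i => condE n z i) := by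
    ext i
    rw [Finset.mem_filter, Finset.mem_filter]
    constructor
    · intro ⟨hIcc, hcE⟩
      have := Finset.mem_Icc.1 hIcc
      exact ⟨condE_mem this.1 this.2 hcE, hcE⟩
    · intro ⟨him, hcE⟩
      exact ⟨hz him, hcE⟩
  have hCard1 : (z.filter (fun i => condE n z i)).card
      + (z.filter (fun i => ¬ condE n z i)).card = z.card :=
    Finset.card_filter_add_card_filter_not _
  have hStars : stars n z = (Icc 1 n).filter (fun i => condE n z i)
      ∪ (Icc 1 n).filter (fun i => condR z i) := by
    ext i
    rw [stars, Finset.mem_union, Finset.mem_filter, Finset.mem_filter, Finset.mem_filter]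
    constructor
    · intro ⟨hIcc, hs⟩
      have hI := Finset.mem_Icc.1 hIcc
      by_cases him : i ∈ z
      · exact Or.inl ⟨hIcc, (charE hI.1 hI.2 him).1 hs⟩
      · exact Or.inr ⟨hIcc, (charR hI.1 him).1 hs⟩
    · intro h
      rcases h with ⟨hIcc, hcE⟩ | ⟨hIcc, hcR⟩
      · have hI := Finset.mem_Icc.1 hIcc
        exact ⟨hIcc, (charE hI.1 hI.2 (condE_mem hI.1 hI.2 hcE)).2 hcE⟩
      · have hI := Finset.mem_Icc.1 hIcc
        exact ⟨hIcc, (charR hI.1 (condR_not_mem hI.1 hcR)).2 hcR⟩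
  have hdisj : Disjoint ((Icc 1 n).filter (fun i => condE n z i))
      ((Icc 1 n).filter (fun i => condR z i)) := by
    rw [Finset.disjoint_left]
    intro i h1 h2
    rw [Finset.mem_filter] at h1 h2
    have hI := Finset.mem_Icc.1 h1.1
    exact (condR_not_mem hI.1 h2.2) (condE_mem hI.1 hI.2 h1.2)
  have hStarsCard : (stars n z).card = ((Icc 1 n).filter (fun i => condE n z i)).card
      + ((Icc 1 n).filter (fun i => condR z i)).card := by
    rw [hStars, Finset.card_union_of_disjoint hdisj]
  have hGn : (Gf z n : ℤ) = 2 * (z.card : ℤ) - n := by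
    have hzcard : z.card ≤ n := by
      have := Finset.card_le_card hz
      rw [Nat.card_Icc] at this
      omega
    rw [Gf, cfun]
    have e1 : Icc 1 n ∩ z = z := Finset.inter_eq_right.2 hz
    have e2 : (Icc 1 n \ z).card = n - z.card := by
      rw [Finset.card_sdiff_of_subset hz, Nat.card_Icc]
      omega
    rw [e1, e2]
    push_cast [Nat.cast_sub hzcard]
    ring
  rw [hEz] at hE
  rw [hOnes, hStarsCard, hEz]
  omega

/-- Direction ⊆ of the class description. -/
lemma member_form {n : ℕ} {x y : Finset ℕ} (hy : y ⊆ Icc 1 n)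
    (hsg : ∀ i ∈ Icc 1 n, sgv n y i = sgv n x i) :
    ∃ s, s ⊆ stars n x ∧ upset (stars n x) s ∧ y = ones n x ∪ s := by
  obtain ⟨hones, hstars⟩ := sg_filters_eq hsg
  refine ⟨stars n x ∩ y, Finset.inter_subset_left, ?_, ?_⟩
  · intro a ha b hb hab
    rw [Finset.mem_inter] at ha
    refine Finset.mem_inter.2 ⟨hb, ?_⟩
    by_contra hby
    rcases Nat.eq_or_lt_of_le hab with he | hlt
    · exact hby (he ▸ ha.2)
    · rw [← hstars] at hb
      have haY : a ∈ stars n y := by rw [hstars]; exact ha.1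
      rw [stars, Finset.mem_filter, Finset.mem_Icc] at haY hb
      exact starA haY.1.1 hlt hb.1.2 ha.2 hby haY.2 hb.2
  · rw [← hones, ← hstars]
    exact mem_decomp hy

lemma union_subset_Icc {n : ℕ} {x s : Finset ℕ} (hs : s ⊆ stars n x) :
    ones n x ∪ s ⊆ Icc 1 n :=
  Finset.union_subset (ones_subset n x) (fun a ha => stars_subset n x (hs ha))

lemma exists_upset (S : Finset ℕ) : ∀ k, k ≤ S.card →
    ∃ s, s ⊆ S ∧ upset S s ∧ s.card = k := by
  intro k
  induction k with
  | zero =>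
    intro _
    exact ⟨∅, Finset.empty_subset _, fun a ha => absurd ha (Finset.notMem_empty a),
      Finset.card_empty⟩
  | succ k ih =>
    intro hk
    obtain ⟨s, hsS, hsup, hscard⟩ := ih (by omega)
    have hne : (S \ s).Nonempty := by
      rw [← Finset.card_pos, Finset.card_sdiff_of_subset hsS]
      omega
    set q := (S \ s).max' hne with hq
    have hqmem : q ∈ S \ s := Finset.max'_mem _ hne
    rw [Finset.mem_sdiff] at hqmem
    refine ⟨insert q s, ?_, ?_, ?_⟩
    · intro a ha
      rcases Finset.mem_insert.1 ha with h | h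
      · exact h ▸ hqmem.1
      · exact hsS h
    · intro a ha b hb hab
      rcases Finset.mem_insert.1 ha with h | h
      · subst h
        by_cases hbs : b ∈ s
        · exact Finset.mem_insert_of_mem hbs
        · have : b ∈ S \ s := Finset.mem_sdiff.2 ⟨hb, hbs⟩
          have := Finset.le_max' _ b this
          have hba : b = q := by omega
          exact hba ▸ Finset.mem_insert_self _ _
      · exact Finset.mem_insert_of_mem (hsup a h b hb hab)
    · rw [Finset.card_insert_of_notMem hqmem.2, hscard]

lemma upset_card_eq {S s t : Finset ℕ} (hs : s ⊆ S) (ht : t ⊆ S)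
    (hus : upset S s) (hut : upset S t) (hcard : s.card = t.card) : s = t := by
  rcases upset_comparable hs ht hus hut with h | h
  · exact Finset.eq_of_subset_of_card_le h (by omega)
  · exact (Finset.eq_of_subset_of_card_le h (by omega)).symm

/-- the equivalence class of `x` under "equal signature" is exactly
the family `1(x) ∪ s` for `s` an up-set of `*(x)`; `1(x)` and `*(x)` are disjoint
with `2|1(x)| + |*(x)| = n` (so the member corresponding to an up-set of size
`t - u` has size `(n+t)/2 - u`); each class is a chain; and the classes form a
partition of `2^[n]` into `C(n,⌊n/2⌋)` symmetric chains. -/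
theorem stmt_11 (n : ℕ) (x : Finset ℕ) (hx : x ⊆ Finset.Icc 1 n) :
    ({y : Finset ℕ | y ⊆ Finset.Icc 1 n ∧ ∀ i ∈ Finset.Icc 1 n, sgv n y i = sgv n x i} =
      {y : Finset ℕ | ∃ s ⊆ (Finset.Icc 1 n).filter (fun i => sgv n x i = 2),
        (∀ a ∈ s, ∀ b ∈ (Finset.Icc 1 n).filter (fun i => sgv n x i = 2), a ≤ b → b ∈ s) ∧
        y = (Finset.Icc 1 n).filter (fun i => sgv n x i = 1) ∪ s}) ∧
    Disjoint ((Finset.Icc 1 n).filter (fun i => sgv n x i = 1))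
      ((Finset.Icc 1 n).filter (fun i => sgv n x i = 2)) ∧
    2 * ((Finset.Icc 1 n).filter (fun i => sgv n x i = 1)).card +
      ((Finset.Icc 1 n).filter (fun i => sgv n x i = 2)).card = n ∧
    IsChain (· ⊆ ·)
      {y : Finset ℕ | y ⊆ Finset.Icc 1 n ∧ ∀ i ∈ Finset.Icc 1 n, sgv n y i = sgv n x i} ∧
    Nat.card {C : Set (Finset ℕ) // ∃ z ⊆ Finset.Icc 1 n,
        C = {y : Finset ℕ | y ⊆ Finset.Icc 1 n ∧
          ∀ i ∈ Finset.Icc 1 n, sgv n y i = sgv n z i}} = n.choose (n / 2) := by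

  have e1 : (Finset.Icc 1 n).filter (fun i => sgv n x i = 1) = ones n x := rfl
  have e2 : (Finset.Icc 1 n).filter (fun i => sgv n x i = 2) = stars n x := rfl
  refine ⟨?_, ?_, ?_, ?_, ?_⟩
  · -- class description
    ext y
    simp only [Set.mem_setOf_eq, e1, e2]
    constructor
    · rintro ⟨hy, hsg⟩
      obtain ⟨s, hs1, hs2, hs3⟩ := member_form hy hsg
      exact ⟨s, hs1, hs2, hs3⟩
    · rintro ⟨s, hs1, hs2, hs3⟩
      subst hs3
      exact ⟨union_subset_Icc hs1, classUnion hx hs1 hs2⟩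
  · rw [e1, e2]
    exact disj_ones_stars n x
  · rw [e1, e2]
    exact size_id hx
  · -- chain
    intro y1 h1 y2 h2 _
    simp only [Set.mem_setOf_eq] at h1 h2
    obtain ⟨s1, ha1, hb1, hc1⟩ := member_form h1.1 h1.2
    obtain ⟨s2, ha2, hb2, hc2⟩ := member_form h2.1 h2.2
    rcases upset_comparable ha1 ha2 hb1 hb2 with h | h
    · left
      rw [hc1, hc2]
      exact Finset.union_subset_union (Finset.Subset.refl _) h
    · right
      rw [hc1, hc2]
      exact Finset.union_subset_union (Finset.Subset.refl _) h
  · -- counting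
    classical
    set f : {y : Finset ℕ // y ∈ Finset.powersetCard (n/2) (Finset.Icc 1 n)} →
        {C : Set (Finset ℕ) // ∃ z ⊆ Finset.Icc 1 n,
          C = {y : Finset ℕ | y ⊆ Finset.Icc 1 n ∧
            ∀ i ∈ Finset.Icc 1 n, sgv n y i = sgv n z i}} :=
      fun y => ⟨{w : Finset ℕ | w ⊆ Finset.Icc 1 n ∧
          ∀ i ∈ Finset.Icc 1 n, sgv n w i = sgv n y.1 i},
        y.1, (Finset.mem_powersetCard.1 y.2).1, rfl⟩ with hf
    have hbij : Function.Bijective f := by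
      constructor
      · intro y1 y2 hfe
        have hv : ({w : Finset ℕ | w ⊆ Finset.Icc 1 n ∧
            ∀ i ∈ Finset.Icc 1 n, sgv n w i = sgv n y1.1 i} : Set (Finset ℕ)) =
            {w : Finset ℕ | w ⊆ Finset.Icc 1 n ∧
            ∀ i ∈ Finset.Icc 1 n, sgv n w i = sgv n y2.1 i} := congrArg Subtype.val hfe
        have hsub1 : y1.1 ⊆ Finset.Icc 1 n := (Finset.mem_powersetCard.1 y1.2).1
        have hsub2 : y2.1 ⊆ Finset.Icc 1 n := (Finset.mem_powersetCard.1 y2.2).1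
        have hy2self : y2.1 ∈ ({w : Finset ℕ | w ⊆ Finset.Icc 1 n ∧
            ∀ i ∈ Finset.Icc 1 n, sgv n w i = sgv n y2.1 i} : Set (Finset ℕ)) :=
          ⟨hsub2, fun i _ => rfl⟩
        rw [← hv] at hy2self
        obtain ⟨_, hsg⟩ := hy2self
        obtain ⟨s2, hs2S, hs2up, he2⟩ := member_form hsub2 hsg
        obtain ⟨s1, hs1S, hs1up, he1⟩ := member_form hsub1
          (fun i _ => rfl : ∀ i ∈ Finset.Icc 1 n, sgv n y1.1 i = sgv n y1.1 i)
        have hc1 : y1.1.card = n/2 := (Finset.mem_powersetCard.1 y1.2).2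
        have hc2 : y2.1.card = n/2 := (Finset.mem_powersetCard.1 y2.2).2
        have hd1 : Disjoint (ones n y1.1) s1 :=
          Finset.disjoint_of_subset_right hs1S (disj_ones_stars _ _)
        have hd2 : Disjoint (ones n y1.1) s2 :=
          Finset.disjoint_of_subset_right hs2S (disj_ones_stars _ _)
        have hu1 : y1.1.card = (ones n y1.1).card + s1.card := by
          conv_lhs => rw [he1]
          exact Finset.card_union_of_disjoint hd1
        have hu2 : y2.1.card = (ones n y1.1).card + s2.card := by
          conv_lhs => rw [he2]
          exact Finset.card_union_of_disjoint hd2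
        have : s1 = s2 := upset_card_eq hs1S hs2S hs1up hs2up (by omega)
        apply Subtype.ext
        rw [he1, he2, this]
      · intro C
        obtain ⟨z, hzsub, hzC⟩ := C.2
        have hsz := size_id hzsub
        obtain ⟨s, hsS, hsup, hscard⟩ :=
          exists_upset (stars n z) ((stars n z).card / 2) (Nat.div_le_self _ _)
        have hysub : ones n z ∪ s ⊆ Finset.Icc 1 n := union_subset_Icc hsS
        have hycard : (ones n z ∪ s).card = n / 2 := by
          rw [Finset.card_union_of_disjoint
            (Finset.disjoint_of_subset_right hsS (disj_ones_stars n z)), hscard]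
          omega
        have hysg : ∀ i ∈ Finset.Icc 1 n, sgv n (ones n z ∪ s) i = sgv n z i :=
          classUnion hzsub hsS hsup
        refine ⟨⟨ones n z ∪ s, Finset.mem_powersetCard.2 ⟨hysub, hycard⟩⟩, ?_⟩
        apply Subtype.ext
        show {w : Finset ℕ | w ⊆ Finset.Icc 1 n ∧
            ∀ i ∈ Finset.Icc 1 n, sgv n w i = sgv n (ones n z ∪ s) i} = C.1
        rw [hzC]
        ext w
        simp only [Set.mem_setOf_eq]
        constructor
        · rintro ⟨hw, hwsg⟩
          exact ⟨hw, fun i hi => (hwsg i hi).trans (hysg i hi)⟩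
        · rintro ⟨hw, hwsg⟩
          exact ⟨hw, fun i hi => (hwsg i hi).trans (hysg i hi).symm⟩
    rw [← Nat.card_eq_of_bijective f hbij, Nat.card_eq_finsetCard,
      Finset.card_powersetCard, Nat.card_Icc]
    congr 1
end
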